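/- arXiv:math/0008073 — 5 statements merged into one kernel-verified Lean document; each statement's English description precedes it below -/
import Mathlib

section
/- Let k be a positive integer, λ = (λ_1,…,λ_n) a k-bounded partition, and μ = (μ_1,…,μ_m) = λ^{ω_k} its k-conjugate. Then the conjugate (transpose across the main diagonal) of the skew diagram D(λ) = λ_1 ×^{(k)} ⋯ ×^{(k)} λ_n equals the skew diagram D(μ) = μ_1 ×^{(k)} ⋯ ×^{(k)} μ_m. -/
/-- A partition: a weakly decreasing list of positive integers
(parts listed from largest to smallest). -/
def IsPartitionList (l : List ℕ) : Prop :=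
  l.Pairwise (· ≥ ·) ∧ ∀ x ∈ l, 0 < x

/-- A `k`-bounded partition: a partition all of whose parts are at most `k`. -/
def IsKBoundedPartition (k : ℕ) (l : List ℕ) : Prop :=
  IsPartitionList l ∧ ∀ x ∈ l, x ≤ k

/-- Row `i` of a diagram whose rows (listed bottom-to-top) are encoded as
(start column, length) pairs. -/
def rowOf (D : List (ℕ × ℕ)) (i : ℕ) : ℕ × ℕ := D.getD i (0, 0)

/-- `D` encodes a skew diagram (a difference of Young diagrams, rows listed from
bottom to top): all rows are nonempty and, going up, both the left ends and the
right ends of the rows move weakly to the left. -/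
def IsSkewRows (D : List (ℕ × ℕ)) : Prop :=
  (∀ r ∈ D, 0 < r.2) ∧
  D.Chain' fun r r' => r'.1 ≤ r.1 ∧ r'.1 + r'.2 ≤ r.1 + r.2

/-- Cell in row `i` (from the bottom), column `j`, belongs to the diagram `D`. -/
def InDiag (D : List (ℕ × ℕ)) (i j : ℕ) : Prop :=
  i < D.length ∧ (rowOf D i).1 ≤ j ∧ j < (rowOf D i).1 + (rowOf D i).2

/-- The arm of a cell: the number of cells of `D` strictly to its east. -/
def armLen (D : List (ℕ × ℕ)) (i j : ℕ) : ℕ :=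
  (rowOf D i).1 + (rowOf D i).2 - 1 - j

/-- The leg of a cell: the number of cells of `D` strictly to its north. -/
def legLen (D : List (ℕ × ℕ)) (i j : ℕ) : ℕ :=
  ((Finset.range D.length).filter fun i' =>
    i < i' ∧ (rowOf D i').1 ≤ j ∧ j < (rowOf D i').1 + (rowOf D i').2).card

/-- The hook-length of a cell of `D`. -/
def hookLen (D : List (ℕ × ℕ)) (i j : ℕ) : ℕ := armLen D i j + legLen D i j + 1

/-- All hook-lengths of `D` are at most `k`. -/
def HookBounded (k : ℕ) (D : List (ℕ × ℕ)) : Prop :=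
  ∀ i j, InDiag D i j → hookLen D i j ≤ k

/-- Shift `D` one column to the right and adjoin a new column of `m` cells in
column `0`, occupying the `m` consecutive rows `h, …, h + m - 1`. -/
def addCol (m h : ℕ) (D : List (ℕ × ℕ)) : List (ℕ × ℕ) :=
  (List.range (max D.length (h + m))).map fun i =>
    if h ≤ i ∧ i < h + m then
      if i < D.length then (0, (rowOf D i).1 + (rowOf D i).2 + 1) else (0, 1)
    else ((rowOf D i).1 + 1, (rowOf D i).2)

/-- The placement of the new column at height `h` yields a genuine skew diagram
(rows stay contiguous) whose hook-lengths are bounded by `k`. -/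
def ColValid (k m h : ℕ) (D : List (ℕ × ℕ)) : Prop :=
  (∀ i, h ≤ i → i < h + m → i < D.length → (rowOf D i).1 = 0) ∧
  IsSkewRows (addCol m h D) ∧ HookBounded k (addCol m h D)

/-- `k`-multiplication `m ×^{(k)} D`: adjoin a first column of length `m` to `D`
so that the result is a skew diagram with hook-lengths bounded by `k`, having as
few rows as possible (the valid placement heights `h` all satisfy
`h + m ≥ number of rows`, so the lowest valid placement has fewest rows). -/
noncomputable def kMul (k m : ℕ) (D : List (ℕ × ℕ)) : List (ℕ × ℕ) :=
  addCol m (sInf {h | ColValid k m h D}) D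

/-- `D(λ)`: the skew diagram obtained by `k`-multiplying the parts of `λ` from
right to left, the innermost part giving a single column. -/
noncomputable def kSkewDiagram (k : ℕ) : List ℕ → List (ℕ × ℕ)
  | [] => []
  | m :: rest => kMul k m (kSkewDiagram k rest)

/-- The `k`-conjugate `λ^{ω_k}`: the row lengths of `D(λ)`, read from the bottom
row to the top row. -/
noncomputable def kConjugate (k : ℕ) (l : List ℕ) : List ℕ :=
  (kSkewDiagram k l).map Prod.snd

/-- The set of cells `(row, column)` of the diagram `D`. -/
def cellsOf (D : List (ℕ × ℕ)) : Finset (ℕ × ℕ) :=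
  (Finset.range D.length).biUnion fun i =>
    (Finset.Ico (rowOf D i).1 ((rowOf D i).1 + (rowOf D i).2)).image fun j => (i, j)

/-! ### Basic abbreviations and skew-diagram structure lemmas -/

def sR (D : List (ℕ × ℕ)) (i : ℕ) : ℕ := (rowOf D i).1
def lR (D : List (ℕ × ℕ)) (i : ℕ) : ℕ := (rowOf D i).2
def eR (D : List (ℕ × ℕ)) (i : ℕ) : ℕ := (rowOf D i).1 + (rowOf D i).2

lemma rowOf_of_ge {D : List (ℕ × ℕ)} {i : ℕ} (h : D.length ≤ i) : rowOf D i = (0, 0) :=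
  List.getD_eq_default _ _ h

lemma eR_of_ge {D : List (ℕ × ℕ)} {i : ℕ} (h : D.length ≤ i) : eR D i = 0 := by
  simp [eR, rowOf_of_ge h]

lemma rowOf_lt {D : List (ℕ × ℕ)} {i : ℕ} (hi : i < D.length) : rowOf D i = D[i] :=
  List.getD_eq_getElem D (0,0) hi

lemma sk_pos {D : List (ℕ × ℕ)} (hD : IsSkewRows D) {i : ℕ} (hi : i < D.length) :
    0 < lR D i := by
  have hm : D[i] ∈ D := List.getElem_mem hi
  have h2 := hD.1 _ hm
  show 0 < (rowOf D i).2
  rw [rowOf_lt hi]; exact h2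

lemma sk_adj {D : List (ℕ × ℕ)} (hD : IsSkewRows D) {i : ℕ} (hi : i + 1 < D.length) :
    sR D (i+1) ≤ sR D i ∧ eR D (i+1) ≤ eR D i := by
  have h := List.isChain_iff_getElem.mp hD.2 i (by omega)
  have e1 : rowOf D i = D[i]'(by omega) := rowOf_lt (by omega)
  have e2 : rowOf D (i+1) = D[i+1]'hi := rowOf_lt hi
  constructor
  · simpa [sR, e1, e2] using h.1
  · simpa [eR, e1, e2] using h.2

lemma sk_s_mono {D : List (ℕ × ℕ)} (hD : IsSkewRows D) {i i' : ℕ} (h : i ≤ i')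
    (hi' : i' < D.length) : sR D i' ≤ sR D i := by
  induction i' with
  | zero => have : i = 0 := by omega
            subst this; exact le_refl _
  | succ n ih =>
    rcases Nat.eq_or_lt_of_le h with rfl | hlt
    · exact le_refl _
    · exact le_trans (sk_adj hD hi').1 (ih (by omega) (by omega))

lemma sk_e_mono {D : List (ℕ × ℕ)} (hD : IsSkewRows D) {i i' : ℕ} (h : i ≤ i')
    (hi' : i' < D.length) : eR D i' ≤ eR D i := by
  induction i' with
  | zero => have : i = 0 := by omega
            subst this; exact le_refl _
  | succ n ih =>
    rcases Nat.eq_or_lt_of_le h with rfl | hlt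
    · exact le_refl _
    · exact le_trans (sk_adj hD hi').2 (ih (by omega) (by omega))

/-! ### Columns of a skew diagram -/

noncomputable def colBot (D : List (ℕ × ℕ)) (c : ℕ) : ℕ := sInf {r | sR D r ≤ c}
noncomputable def colTop (D : List (ℕ × ℕ)) (c : ℕ) : ℕ := sInf {r | eR D r ≤ c}

lemma colBot_set_ne (D : List (ℕ × ℕ)) (c : ℕ) : {r | sR D r ≤ c}.Nonempty :=
  ⟨D.length, by simp [sR, rowOf_of_ge (le_refl _)]⟩

lemma colTop_set_ne (D : List (ℕ × ℕ)) (c : ℕ) : {r | eR D r ≤ c}.Nonempty :=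
  ⟨D.length, by simp [eR_of_ge (le_refl _)]⟩

lemma colBot_le_length (D : List (ℕ × ℕ)) (c : ℕ) : colBot D c ≤ D.length :=
  Nat.sInf_le (by simp [sR, rowOf_of_ge (le_refl _)])

lemma colTop_le_length (D : List (ℕ × ℕ)) (c : ℕ) : colTop D c ≤ D.length :=
  Nat.sInf_le (by simp [eR_of_ge (le_refl _)])

lemma lt_colTop_iff {D : List (ℕ × ℕ)} (hD : IsSkewRows D) {r c : ℕ} :
    r < colTop D c ↔ r < D.length ∧ c < eR D r := by
  constructor
  · intro h
    have h1 : r < D.length := lt_of_lt_of_le h (colTop_le_length D c)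
    refine ⟨h1, ?_⟩
    by_contra hc
    have hle : colTop D c ≤ r := Nat.sInf_le (show eR D r ≤ c by omega)
    omega
  · rintro ⟨h1, h2⟩
    by_contra hc
    push_neg at hc
    have hmem : eR D (colTop D c) ≤ c := Nat.sInf_mem (colTop_set_ne D c)
    have := sk_e_mono hD hc h1
    omega

lemma colBot_le_iff {D : List (ℕ × ℕ)} (hD : IsSkewRows D) {r c : ℕ} (hr : r < D.length) :
    colBot D c ≤ r ↔ sR D r ≤ c := by
  constructor
  · intro h
    have hmem : sR D (colBot D c) ≤ c := Nat.sInf_mem (colBot_set_ne D c)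
    exact le_trans (sk_s_mono hD h hr) hmem
  · intro h
    exact Nat.sInf_le h

lemma InDiag_iff_col {D : List (ℕ × ℕ)} (hD : IsSkewRows D) {r c : ℕ} :
    InDiag D r c ↔ colBot D c ≤ r ∧ r < colTop D c := by
  constructor
  · rintro ⟨h1, h2, h3⟩
    exact ⟨(colBot_le_iff hD h1).mpr h2, (lt_colTop_iff hD).mpr ⟨h1, h3⟩⟩
  · rintro ⟨h1, h2⟩
    have h3 := (lt_colTop_iff hD).mp h2
    exact ⟨h3.1, (colBot_le_iff hD h3.1).mp h1, h3.2⟩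

lemma col_char {E : List (ℕ × ℕ)} (hE : IsSkewRows E) {c B T : ℕ} (hBT : B < T)
    (hch : ∀ r, InDiag E r c ↔ (B ≤ r ∧ r < T)) :
    colBot E c = B ∧ colTop E c = T := by
  have h1 : InDiag E B c := (hch B).mpr ⟨le_refl _, hBT⟩
  have h2 : InDiag E (T-1) c := (hch (T-1)).mpr ⟨by omega, by omega⟩
  rw [InDiag_iff_col hE] at h1 h2
  have h3 : InDiag E (colBot E c) c := (InDiag_iff_col hE).mpr ⟨le_refl _, by omega⟩
  have h4 : InDiag E (colTop E c - 1) c := (InDiag_iff_col hE).mpr ⟨by omega, by omega⟩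
  rw [hch] at h3 h4
  omega

lemma colTop_zero {D : List (ℕ × ℕ)} (hD : IsSkewRows D) : colTop D 0 = D.length := by
  refine le_antisymm (colTop_le_length D 0) ?_
  by_contra hc
  push_neg at hc
  have hmem : eR D (colTop D 0) ≤ 0 := Nat.sInf_mem (colTop_set_ne D 0)
  have := sk_pos hD hc
  simp only [eR, lR] at *
  omega

lemma legLen_eq {D : List (ℕ × ℕ)} (hD : IsSkewRows D) {r c : ℕ} (h : InDiag D r c) :
    legLen D r c = colTop D c - 1 - r := by
  have hset : ((Finset.range D.length).filter fun i' =>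
      r < i' ∧ (rowOf D i').1 ≤ c ∧ c < (rowOf D i').1 + (rowOf D i').2)
      = Finset.Ico (r+1) (colTop D c) := by
    ext i'
    simp only [Finset.mem_filter, Finset.mem_range, Finset.mem_Ico]
    constructor
    · rintro ⟨h1, h2, h3, h4⟩
      have : InDiag D i' c := ⟨h1, h3, h4⟩
      rw [InDiag_iff_col hD] at this
      omega
    · rintro ⟨h1, h2⟩
      have hb : colBot D c ≤ r := ((InDiag_iff_col hD).mp h).1
      have : InDiag D i' c := (InDiag_iff_col hD).mpr ⟨by omega, h2⟩
      exact ⟨this.1, by omega, this.2.1, this.2.2⟩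
  rw [legLen, hset, Nat.card_Ico]
  have := ((InDiag_iff_col hD).mp h).2
  omega

lemma armLen_eq (D : List (ℕ × ℕ)) (r c : ℕ) : armLen D r c = eR D r - 1 - c := rfl

lemma hookLen_eq {D : List (ℕ × ℕ)} (hD : IsSkewRows D) {r c : ℕ} (h : InDiag D r c) :
    hookLen D r c = (eR D r - 1 - c) + (colTop D c - 1 - r) + 1 := by
  rw [hookLen, armLen_eq, legLen_eq hD h]

lemma bot_antitone {D : List (ℕ × ℕ)} (hD : IsSkewRows D) {c : ℕ}
    (h1 : colBot D c < colTop D c) (h2 : colBot D (c+1) < colTop D (c+1)) :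
    colBot D (c+1) ≤ colBot D c := by
  by_contra hc
  push_neg at hc
  set B := colBot D (c+1) with hB
  have hcell : InDiag D (colBot D c) c := (InDiag_iff_col hD).mpr ⟨le_refl _, h1⟩
  have hcell' : InDiag D B (c+1) := (InDiag_iff_col hD).mpr ⟨le_refl _, h2⟩
  have hrlen : B - 1 < D.length := by
    have := (lt_colTop_iff hD).mp h2
    omega
  have hs : sR D (B-1) ≤ c := le_trans (sk_s_mono hD (by omega) hrlen) hcell.2.1
  have he : eR D B ≤ eR D (B-1) := sk_e_mono hD (by omega) (by
    have := (lt_colTop_iff hD).mp h2; omega)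
  have h22 : c + 1 < eR D B := hcell'.2.2
  have : InDiag D (B-1) (c+1) :=
    ⟨hrlen, show sR D (B-1) ≤ c+1 by omega, show c+1 < eR D (B-1) by omega⟩
  have := ((InDiag_iff_col hD).mp this).1
  omega

lemma top_antitone {D : List (ℕ × ℕ)} (hD : IsSkewRows D) {c : ℕ}
    (h1 : colBot D c < colTop D c) (h2 : colBot D (c+1) < colTop D (c+1)) :
    colTop D (c+1) ≤ colTop D c := by
  by_contra hc
  push_neg at hc
  set T := colTop D (c+1) with hT
  have hcell' : InDiag D (T-1) (c+1) := (InDiag_iff_col hD).mpr ⟨by omega, by omega⟩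
  have hcell : InDiag D (colTop D c - 1) c := (InDiag_iff_col hD).mpr ⟨by omega, by omega⟩
  have h21 : sR D (T-1) ≤ c+1 := hcell'.2.1
  have h22 : c + 1 < eR D (T-1) := hcell'.2.2
  have hc21 : sR D (colTop D c - 1) ≤ c := hcell.2.1
  have hslec : sR D (T-1) ≤ c := by
    rcases Nat.lt_or_ge (sR D (T-1)) (c+1) with h | h
    · omega
    · have := sk_s_mono hD (show colTop D c - 1 ≤ T - 1 by omega) hcell'.1
      omega
  have : InDiag D (T-1) c := ⟨hcell'.1, hslec, show c < eR D (T-1) by omega⟩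
  have := ((InDiag_iff_col hD).mp this).2
  omega

lemma mem_cellsOf {D : List (ℕ × ℕ)} {p : ℕ × ℕ} :
    p ∈ cellsOf D ↔ InDiag D p.1 p.2 := by
  obtain ⟨x, y⟩ := p
  simp only [cellsOf, Finset.mem_biUnion, Finset.mem_range, Finset.mem_image, Finset.mem_Ico,
    InDiag]
  constructor
  · rintro ⟨i, hi, j, hj, heq⟩
    obtain ⟨rfl, rfl⟩ : i = x ∧ j = y := by
      constructor <;> [exact (Prod.mk.injEq _ _ _ _ ▸ heq).1; exact (Prod.mk.injEq _ _ _ _ ▸ heq).2]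
    exact ⟨hi, hj⟩
  · rintro ⟨h1, h2⟩
    exact ⟨x, h1, y, h2, rfl⟩

/-! ### addCol computation lemmas -/

lemma InDiag_def {D : List (ℕ × ℕ)} {i j : ℕ} :
    InDiag D i j ↔ i < D.length ∧ sR D i ≤ j ∧ j < eR D i := Iff.rfl

lemma addCol_length (m h : ℕ) (D : List (ℕ × ℕ)) :
    (addCol m h D).length = max D.length (h + m) := by
  simp [addCol]

lemma rowOf_addCol {m h i : ℕ} {D : List (ℕ × ℕ)} (hi : i < max D.length (h + m)) :
    rowOf (addCol m h D) i =
      if h ≤ i ∧ i < h + m then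
        (if i < D.length then (0, eR D i + 1) else (0, 1))
      else (sR D i + 1, lR D i) := by
  have hlen : i < (addCol m h D).length := by rw [addCol_length]; exact hi
  rw [rowOf, List.getD_eq_getElem _ _ hlen]
  simp only [addCol, List.getElem_map, List.getElem_range]
  rfl

section addColFacts

variable {k m h : ℕ} {D : List (ℕ × ℕ)}

lemma sR_addCol_col0 {i : ℕ} (h1 : h ≤ i) (h2 : i < h + m) :
    sR (addCol m h D) i = 0 := by
  show (rowOf (addCol m h D) i).1 = 0
  rw [rowOf_addCol (by omega), if_pos ⟨h1, h2⟩]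
  by_cases hil : i < D.length <;> simp [hil]

lemma sR_addCol_out {i : ℕ} (h1 : ¬(h ≤ i ∧ i < h + m)) (h2 : i < max D.length (h+m)) :
    sR (addCol m h D) i = sR D i + 1 := by
  show (rowOf (addCol m h D) i).1 = sR D i + 1
  rw [rowOf_addCol h2, if_neg h1]

lemma addCol_h_le (hA : IsSkewRows (addCol m h D)) (hm : 0 < m) : h ≤ D.length := by
  by_contra hc
  push_neg at hc
  have hi : h - 1 < max D.length (h + m) := by omega
  have hp := sk_pos hA (i := h-1) (by rw [addCol_length]; omega)
  have hp' : 0 < (rowOf (addCol m h D) (h-1)).2 := hp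
  rw [rowOf_addCol hi, if_neg (by omega)] at hp'
  have hz : lR D (h-1) = 0 := by
    show (rowOf D (h-1)).2 = 0
    rw [rowOf_of_ge (show D.length ≤ h - 1 by omega)]
  simp only [hz] at hp'
  simp at hp' 

lemma addCol_le_hm (hA : IsSkewRows (addCol m h D)) (hm : 0 < m) : D.length ≤ h + m := by
  by_contra hc
  push_neg at hc
  have h1 := (sk_adj hA (i := h + m - 1) (by rw [addCol_length]; omega)).1
  have e1 : h + m - 1 + 1 = h + m := by omega
  rw [e1] at h1
  have h2 : sR (addCol m h D) (h+m-1) = 0 := sR_addCol_col0 (by omega) (by omega)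
  have h3 : sR (addCol m h D) (h+m) = sR D (h+m) + 1 :=
    sR_addCol_out (by omega) (by omega)
  rw [h2, h3] at h1
  omega

lemma addCol_length' (hA : IsSkewRows (addCol m h D)) (hm : 0 < m) :
    (addCol m h D).length = h + m := by
  rw [addCol_length]
  have := addCol_le_hm hA hm
  omega

lemma eR_addCol (hA : IsSkewRows (addCol m h D)) (hm : 0 < m) {i : ℕ} (hi : i < h + m) :
    eR (addCol m h D) i = if i < D.length then eR D i + 1 else 1 := by
  have hle := addCol_h_le hA hm
  have hi' : i < max D.length (h + m) := by omega
  show (rowOf (addCol m h D) i).1 + (rowOf (addCol m h D) i).2 = _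
  rw [rowOf_addCol hi']
  by_cases hcol : h ≤ i ∧ i < h + m
  · rw [if_pos hcol]
    by_cases hil : i < D.length
    · simp [hil, eR]
    · simp [hil]
  · rw [if_neg hcol]
    have hil : i < D.length := by omega
    simp only [if_pos hil, eR, sR, lR]
    omega

lemma InDiag_addCol_zero (hA : IsSkewRows (addCol m h D)) (hm : 0 < m) {i : ℕ} :
    InDiag (addCol m h D) i 0 ↔ h ≤ i ∧ i < h + m := by
  have hle := addCol_h_le hA hm
  have hlen := addCol_length' hA hm
  rw [InDiag_def, hlen]
  constructor
  · rintro ⟨h1, h2, h3⟩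
    by_contra hc
    have hs := sR_addCol_out (m := m) (h := h) (D := D) (i := i) hc (by omega)
    omega
  · rintro ⟨h1, h2⟩
    have hs : sR (addCol m h D) i = 0 := sR_addCol_col0 h1 h2
    have hE := eR_addCol hA hm h2
    refine ⟨by omega, by omega, ?_⟩
    by_cases hil : i < D.length
    · rw [if_pos hil] at hE; omega
    · rw [if_neg hil] at hE; omega

lemma InDiag_addCol_succ (hD : IsSkewRows D) (hA : IsSkewRows (addCol m h D)) (hm : 0 < m)
    (hc1 : ∀ i, h ≤ i → i < h + m → i < D.length → (rowOf D i).1 = 0) {i c : ℕ} :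
    InDiag (addCol m h D) i (c+1) ↔ InDiag D i c := by
  have hle := addCol_h_le hA hm
  have hlm := addCol_le_hm hA hm
  have hlen := addCol_length' hA hm
  rw [InDiag_def, InDiag_def, hlen]
  by_cases hcol : h ≤ i ∧ i < h + m
  · have hs : sR (addCol m h D) i = 0 := sR_addCol_col0 hcol.1 hcol.2
    have hE := eR_addCol hA hm hcol.2
    by_cases hil : i < D.length
    · rw [if_pos hil] at hE
      have hs0 : sR D i = 0 := hc1 i hcol.1 hcol.2 hil
      constructor
      · rintro ⟨-, -, h3⟩; exact ⟨hil, by omega, by omega⟩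
      · rintro ⟨-, -, h3⟩; exact ⟨hcol.2, by omega, by omega⟩
    · rw [if_neg hil] at hE
      constructor
      · rintro ⟨-, -, h3⟩; omega
      · rintro ⟨h1, -, -⟩; omega
  · constructor
    · rintro ⟨h1, h2, h3⟩
      have hil : i < D.length := by omega
      have hs := sR_addCol_out (m := m) (h := h) (D := D) (i := i) hcol (by omega)
      have hE := eR_addCol hA hm (show i < h + m by omega)
      rw [if_pos hil] at hE
      exact ⟨hil, by omega, by omega⟩
    · rintro ⟨h1, h2, h3⟩
      have hs := sR_addCol_out (m := m) (h := h) (D := D) (i := i) hcol (by omega)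
      have hE := eR_addCol hA hm (show i < h + m by omega)
      rw [if_pos h1] at hE
      exact ⟨by omega, by omega, by omega⟩

lemma colBotTop_addCol_zero (hA : IsSkewRows (addCol m h D)) (hm : 0 < m) :
    colBot (addCol m h D) 0 = h ∧ colTop (addCol m h D) 0 = h + m :=
  col_char hA (by omega) (fun _ => InDiag_addCol_zero hA hm)

lemma colBotTop_addCol_succ (hD : IsSkewRows D) (hA : IsSkewRows (addCol m h D)) (hm : 0 < m)
    (hc1 : ∀ i, h ≤ i → i < h + m → i < D.length → (rowOf D i).1 = 0) {c : ℕ}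
    (hne : colBot D c < colTop D c) :
    colBot (addCol m h D) (c+1) = colBot D c ∧ colTop (addCol m h D) (c+1) = colTop D c :=
  col_char hA hne (fun _ => (InDiag_addCol_succ hD hA hm hc1).trans (InDiag_iff_col hD))

lemma hookLen_addCol_succ (hD : IsSkewRows D) (hA : IsSkewRows (addCol m h D)) (hm : 0 < m)
    (hc1 : ∀ i, h ≤ i → i < h + m → i < D.length → (rowOf D i).1 = 0) {i c : ℕ}
    (hin : InDiag D i c) :
    hookLen (addCol m h D) i (c+1) = hookLen D i c := by
  have hinA : InDiag (addCol m h D) i (c+1) := (InDiag_addCol_succ hD hA hm hc1).mpr hin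
  have hne : colBot D c < colTop D c := by
    have := (InDiag_iff_col hD).mp hin
    omega
  have hT := (colBotTop_addCol_succ hD hA hm hc1 hne).2
  rw [hookLen_eq hA hinA, hookLen_eq hD hin, hT]
  have hE := eR_addCol hA hm (show i < h + m by
    have := addCol_le_hm hA hm; have := hin.1; omega)
  rw [if_pos hin.1] at hE
  rw [hE]
  have he1 : c < eR D i := hin.2.2
  omega

lemma hookLen_addCol_zero (hA : IsSkewRows (addCol m h D)) (hm : 0 < m) {i : ℕ}
    (h1 : h ≤ i) (h2 : i < h + m) :
    hookLen (addCol m h D) i 0 = (if i < D.length then eR D i else 0) + (h + m - i) := by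
  have hinA : InDiag (addCol m h D) i 0 := (InDiag_addCol_zero hA hm).mpr ⟨h1, h2⟩
  have hT := (colBotTop_addCol_zero hA hm).2
  rw [hookLen_eq hA hinA, hT]
  have hE := eR_addCol hA hm h2
  rw [hE]
  by_cases hil : i < D.length <;> simp only [if_pos, if_neg, hil, if_true, if_false] <;> omega

end addColFacts

/-! ### Building skew diagrams, the Good invariant -/

lemma isSkewRows_of {D : List (ℕ × ℕ)} (hpos : ∀ i, i < D.length → 0 < lR D i)
    (hch : ∀ i, i + 1 < D.length → sR D (i+1) ≤ sR D i ∧ eR D (i+1) ≤ eR D i) :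
    IsSkewRows D := by
  constructor
  · intro r hr
    obtain ⟨i, hi, rfl⟩ := List.mem_iff_getElem.mp hr
    have := hpos i hi
    simp only [lR] at this
    rwa [rowOf_lt hi] at this
  · refine List.isChain_iff_getElem.mpr ?_
    intro i hi
    have hia : i < D.length := by omega
    have hib : i + 1 < D.length := by omega
    have h2 := hch i hib
    simp only [sR, eR] at h2
    rw [rowOf_lt hia, rowOf_lt hib] at h2
    exact h2

lemma hpos_aux {D : List (ℕ × ℕ)} (hD : IsSkewRows D) {i : ℕ} (hil : i < D.length) :
    0 < (sR D i + 1, lR D i).2 := by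
  have := sk_pos hD hil
  simpa [lR] using this

lemma isSkewRows_addCol {m h : ℕ} {D : List (ℕ × ℕ)} (hD : IsSkewRows D) (hm : 0 < m)
    (hhle : h ≤ D.length) (hlm : D.length ≤ h + m)
    (hc1 : ∀ i, h ≤ i → i < h + m → i < D.length → (rowOf D i).1 = 0) :
    IsSkewRows (addCol m h D) := by
  have hlen : (addCol m h D).length = h + m := by
    rw [addCol_length]; omega
  apply isSkewRows_of
  · intro i hi
    rw [hlen] at hi
    show 0 < (rowOf (addCol m h D) i).2
    rw [rowOf_addCol (by omega)]
    by_cases hcol : h ≤ i ∧ i < h + m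
    · rw [if_pos hcol]
      by_cases hil : i < D.length <;> simp [hil]
    · rw [if_neg hcol]
      have hil : i < D.length := by omega
      exact hpos_aux hD hil
  · intro i hi
    rw [hlen] at hi
    have hia : i < h + m := by omega
    have key : ∀ j, j < h + m →
        (sR (addCol m h D) j, eR (addCol m h D) j) =
        (if h ≤ j then 0 else sR D j + 1,
         if j < D.length then eR D j + 1 else 1) := by
      intro j hj
      have hj' : j < max D.length (h + m) := by omega
      simp only [sR, eR]
      rw [rowOf_addCol hj']
      by_cases hcol : h ≤ j ∧ j < h + m
      · rw [if_pos hcol, if_pos hcol.1]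
        by_cases hjl : j < D.length
        · simp [hjl, eR]
        · simp [hjl]
      · have hjh : ¬ h ≤ j := by omega
        have hjl : j < D.length := by omega
        rw [if_neg hcol, if_neg hjh, if_pos hjl]
        simp [sR, lR, eR]
        omega
    have k1 := key i (by omega)
    have k2 := key (i+1) hi
    have hadj : i + 1 < D.length → sR D (i+1) ≤ sR D i ∧ eR D (i+1) ≤ eR D i :=
      fun hh => sk_adj hD hh
    rw [Prod.mk.injEq] at k1 k2
    constructor
    · rcases k1 with ⟨k1s, _⟩
      rcases k2 with ⟨k2s, _⟩
      rw [k1s, k2s]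
      by_cases h1 : h ≤ i
      · rw [if_pos h1, if_pos (by omega)]
      · rw [if_neg h1]
        by_cases h2 : h ≤ i + 1
        · rw [if_pos h2]; omega
        · rw [if_neg h2]
          exact Nat.succ_le_succ (hadj (by omega)).1
    · rcases k1 with ⟨_, k1e⟩
      rcases k2 with ⟨_, k2e⟩
      rw [k1e, k2e]
      by_cases h2 : i + 1 < D.length
      · rw [if_pos h2, if_pos (by omega)]
        exact Nat.succ_le_succ (hadj h2).2
      · rw [if_neg h2]
        by_cases h1 : i < D.length
        · rw [if_pos h1]; omega
        · rw [if_neg h1]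

def Good (k : ℕ) (L : List ℕ) (D : List (ℕ × ℕ)) : Prop :=
  IsSkewRows D ∧ HookBounded k D ∧
  (D.length = 0 → L.length = 0) ∧
  (0 < D.length → eR D 0 = L.length) ∧
  (∀ c, c < L.length → colBot D c < colTop D c ∧ colTop D c - colBot D c = L.getD c 0) ∧
  (∀ j c, 0 < j → j < D.length → sR D (j-1) = c + 1 → colBot D c = j →
      k < L.getD c 0 + lR D (j-1))

lemma colValid_top {k a : ℕ} {D : List (ℕ × ℕ)} (hD : IsSkewRows D)
    (hHB : HookBounded k D) (ha : 0 < a) (hak : a ≤ k) :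
    ColValid k a D.length D := by
  have hc1 : ∀ i, D.length ≤ i → i < D.length + a → i < D.length → (rowOf D i).1 = 0 := by
    intro i h1 _ h3; omega
  have hA : IsSkewRows (addCol a D.length D) :=
    isSkewRows_addCol hD ha (le_refl _) (by omega) hc1
  refine ⟨hc1, hA, ?_⟩
  intro i c hin
  rcases c with _ | c
  · have hi := (InDiag_addCol_zero hA ha).mp hin
    rw [hookLen_addCol_zero hA ha hi.1 hi.2, if_neg (by omega)]
    omega
  · have hin' := (InDiag_addCol_succ hD hA ha hc1).mp hin
    rw [hookLen_addCol_succ hD hA ha hc1 hin']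
    exact hHB _ _ hin'

/-! ### The minimality lemma and preservation of Good under kMul -/

lemma getD_mem_of_lt {L : List ℕ} {c : ℕ} (hc : c < L.length) : L.getD c 0 ∈ L := by
  rw [List.getD_eq_getElem _ _ hc]; exact List.getElem_mem hc

lemma diamond {k a : ℕ} {rest : List ℕ} {D : List (ℕ × ℕ)}
    (hG : Good k rest D) (hsort : ∀ x ∈ rest, x ≤ a) (ha : 0 < a) (hak : a ≤ k)
    {h₀ : ℕ} (hv : ColValid k a h₀ D) (h0pos : 0 < h₀)
    (hnv : ¬ ColValid k a (h₀-1) D) (hs : sR D (h₀-1) = 0) :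
    k < a + lR D (h₀-1) := by
  obtain ⟨hD, hHB, hcl3, hwid, hcols, hG4⟩ := hG
  obtain ⟨hc1, hA, hHBA⟩ := hv
  have hle : h₀ ≤ D.length := addCol_h_le hA ha
  have hlm : D.length ≤ h₀ + a := addCol_le_hm hA ha
  have hr1 : h₀ - 1 < D.length := by omega
  have hs' : (rowOf D (h₀-1)).1 = 0 := hs
  have hp' : 0 < (rowOf D (h₀-1)).2 := sk_pos hD hr1
  have hin0 : InDiag D (h₀-1) 0 := ⟨hr1, by omega, by omega⟩
  have hwpos : 0 < rest.length := by
    have hmono := sk_e_mono hD (Nat.zero_le (h₀-1)) hr1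
    have hw := hwid (by omega)
    simp only [eR] at hmono hw
    omega
  have hcol0 := hcols 0 hwpos
  have hr0 : rest.getD 0 0 ≤ a := hsort _ (getD_mem_of_lt hwpos)
  have hb0 : colBot D 0 ≤ h₀ - 1 := ((InDiag_iff_col hD).mp hin0).1
  have ht0 : colTop D 0 = D.length := colTop_zero hD
  have hlt : D.length < h₀ + a := by
    rcases Nat.lt_or_ge D.length (h₀+a) with hx | hx
    · exact hx
    · omega
  have hc1' : ∀ i, h₀-1 ≤ i → i < h₀-1+a → i < D.length → (rowOf D i).1 = 0 := by
    intro i hi1 hi2 hi3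
    rcases Nat.eq_or_lt_of_le hi1 with rfl | hlt2
    · exact hs
    · exact hc1 i (by omega) (by omega) hi3
  have hA' : IsSkewRows (addCol a (h₀-1) D) :=
    isSkewRows_addCol hD ha (by omega) (by omega) hc1'
  have hHB' : ¬ HookBounded k (addCol a (h₀-1) D) := fun hhb => hnv ⟨hc1', hA', hhb⟩
  rw [HookBounded] at hHB'
  push_neg at hHB'
  obtain ⟨i, c, hin, hgt⟩ := hHB'
  rcases c with _ | c
  · have hi := (InDiag_addCol_zero hA' ha).mp hin
    rw [hookLen_addCol_zero hA' ha hi.1 hi.2] at hgt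
    rcases Nat.lt_or_ge i D.length with hil | hil
    · rw [if_pos hil] at hgt
      rcases Nat.eq_or_lt_of_le hi.1 with heq | hgt2
      · subst heq
        have hE : eR D (h₀-1) = (rowOf D (h₀-1)).1 + (rowOf D (h₀-1)).2 := rfl
        have hL : lR D (h₀-1) = (rowOf D (h₀-1)).2 := rfl
        omega
      · exfalso
        have hiA : InDiag (addCol a h₀ D) i 0 :=
          (InDiag_addCol_zero hA ha).mpr ⟨by omega, by omega⟩
        have hk2 := hHBA i 0 hiA
        rw [hookLen_addCol_zero hA ha (by omega) (by omega), if_pos hil] at hk2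
        omega
    · exfalso
      rw [if_neg (by omega)] at hgt
      omega
  · exfalso
    have hin' := (InDiag_addCol_succ hD hA' ha hc1').mp hin
    rw [hookLen_addCol_succ hD hA' ha hc1' hin'] at hgt
    exact absurd (hHB _ _ hin') (by omega)

lemma good_step {k a : ℕ} {rest : List ℕ} {D : List (ℕ × ℕ)}
    (hG : Good k rest D) (hsort : ∀ x ∈ rest, x ≤ a) (ha : 0 < a) (hak : a ≤ k) :
    Good k (a :: rest) (kMul k a D) := by
  have hD := hG.1
  have hHB := hG.2.1
  have hcl3 := hG.2.2.1
  have hwid := hG.2.2.2.1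
  have hcols := hG.2.2.2.2.1
  have hG4 := hG.2.2.2.2.2
  have hSne : {h | ColValid k a h D}.Nonempty := ⟨D.length, colValid_top hD hHB ha hak⟩
  have hv : ColValid k a (sInf {h | ColValid k a h D}) D := Nat.sInf_mem hSne
  set h₀ := sInf {h | ColValid k a h D} with hh₀
  obtain ⟨hc1, hA, hHBA⟩ := hv
  have hle := addCol_h_le hA ha
  have hlm := addCol_le_hm hA ha
  have hlenA := addCol_length' hA ha
  have hkm : kMul k a D = addCol a h₀ D := rfl
  rw [hkm]
  refine ⟨hA, hHBA, ?_, ?_, ?_, ?_⟩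
  · intro hh
    rw [hlenA] at hh
    omega
  · intro _
    have hE := eR_addCol hA ha (show 0 < h₀ + a by omega)
    by_cases hl0 : 0 < D.length
    · rw [if_pos hl0] at hE
      rw [hE, hwid hl0]
      simp
    · rw [if_neg (by omega)] at hE
      rw [hE]
      have h9 : rest.length = 0 := hcl3 (by omega)
      simp [h9]
  · intro c hc
    rcases c with _ | c
    · have h5 := colBotTop_addCol_zero hA ha
      rw [h5.1, h5.2]
      refine ⟨by omega, ?_⟩
      rw [List.getD_cons_zero]
      omega
    · have hc' : c < rest.length := by simpa using hc
      have h6 := hcols c hc'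
      have h7 := colBotTop_addCol_succ hD hA ha hc1 h6.1
      rw [h7.1, h7.2, List.getD_cons_succ]
      exact h6
  · intro j c hj hjlen hsj hbj
    rw [hlenA] at hjlen
    by_cases hcol : h₀ ≤ j - 1 ∧ j - 1 < h₀ + a
    · exfalso
      have hz : sR (addCol a h₀ D) (j-1) = 0 := sR_addCol_col0 hcol.1 hcol.2
      have hsj' : sR (addCol a h₀ D) (j-1) = c + 1 := hsj
      omega
    · have hjl : j - 1 < D.length := by omega
      have hs' := sR_addCol_out (m := a) (h := h₀) (D := D) (i := j-1) hcol (by omega)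
      have hsj' : sR (addCol a h₀ D) (j-1) = c + 1 := hsj
      have hlr : lR (addCol a h₀ D) (j-1) = lR D (j-1) := by
        show (rowOf (addCol a h₀ D) (j-1)).2 = _
        rw [rowOf_addCol (show j - 1 < max D.length (h₀+a) by omega), if_neg hcol]
      rcases c with _ | c'
      · have h5 := colBotTop_addCol_zero hA ha
        have hj0 : j = h₀ := by rw [h5.1] at hbj; omega
        have hs0 : sR D (j-1) = 0 := by omega
        rw [List.getD_cons_zero, hlr]
        have hnv : ¬ ColValid k a (h₀ - 1) D :=
          Nat.notMem_of_lt_sInf (show h₀ - 1 < sInf {h | ColValid k a h D} by omega)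
        have hdia := diamond hG hsort ha hak ⟨hc1, hA, hHBA⟩ (by omega) hnv
          (by rw [← hj0]; exact hs0)
        rw [hj0]
        exact hdia
      · have hsD : sR D (j-1) = c' + 1 := by omega
        have hpos2 : 0 < lR D (j-1) := sk_pos hD hjl
        have hee : c' + 2 ≤ eR D (j-1) := by
          simp only [eR, sR, lR] at hsD hpos2 ⊢
          omega
        have he0 : eR D (j-1) ≤ eR D 0 := sk_e_mono hD (Nat.zero_le _) hjl
        have hw : c' < rest.length := by
          have := hwid (by omega)
          omega
        have h6 := hcols c' hw
        have h7 := colBotTop_addCol_succ hD hA ha hc1 h6.1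
        have hbj' : colBot D c' = j := by rw [h7.1] at hbj; exact hbj
        have hjlenD : j < D.length := by
          have := colTop_le_length D c'
          omega
        have hfin := hG4 j c' hj hjlenD hsD hbj'
        rw [List.getD_cons_succ, hlr]
        exact hfin

lemma good_nil {k : ℕ} : Good k [] [] := by
  refine ⟨⟨fun r hr => absurd hr List.not_mem_nil, List.isChain_nil⟩, ?_, ?_, ?_, ?_, ?_⟩
  · intro i j hin
    exact absurd hin.1 (by simp)
  · intro; rfl
  · intro h; simp at h
  · intro c hc; simp at hc
  · intro j c _ hj; simp at hj

lemma good_kSkew {k : ℕ} (hk : 0 < k) {L : List ℕ} (hL : IsKBoundedPartition k L) :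
    Good k L (kSkewDiagram k L) := by
  induction L with
  | nil => exact good_nil
  | cons a rest ih =>
    obtain ⟨⟨hsort, hpos⟩, hbd⟩ := hL
    have hrest : IsKBoundedPartition k rest :=
      ⟨⟨hsort.of_cons, fun x hx => hpos x (List.mem_cons_of_mem _ hx)⟩,
        fun x hx => hbd x (List.mem_cons_of_mem _ hx)⟩
    have hstep := good_step (ih hrest)
      (fun x hx => List.rel_of_pairwise_cons hsort hx)
      (hpos a (by simp)) (hbd a (by simp))
    exact hstep

/-! ### The transpose diagrams T_j -/

noncomputable def Kj (D : List (ℕ × ℕ)) (j : ℕ) : ℕ := if j < D.length then eR D j else 0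

noncomputable def Tj (D : List (ℕ × ℕ)) (j : ℕ) : List (ℕ × ℕ) :=
  (List.range (Kj D j)).map fun c =>
    (max (colBot D c) j - j, colTop D c - max (colBot D c) j)

lemma Tj_length (D : List (ℕ × ℕ)) (j : ℕ) : (Tj D j).length = Kj D j := by
  simp [Tj]

lemma rowOf_Tj {D : List (ℕ × ℕ)} {j c : ℕ} (hc : c < Kj D j) :
    rowOf (Tj D j) c = (max (colBot D c) j - j, colTop D c - max (colBot D c) j) := by
  rw [rowOf, List.getD_eq_getElem _ _ (by rw [Tj_length]; exact hc)]
  simp [Tj]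

lemma tj_col_facts {k : ℕ} {L : List ℕ} {D : List (ℕ × ℕ)} (hG : Good k L D)
    {j c : ℕ} (hj : j < D.length) (hc : c < eR D j) :
    c < L.length ∧ colBot D c < colTop D c ∧ j < colTop D c := by
  have hD := hG.1
  have hwid := hG.2.2.2.1
  have hcols := hG.2.2.2.2.1
  have h1 : eR D j ≤ eR D 0 := sk_e_mono hD (Nat.zero_le _) hj
  have hcL : c < L.length := by have := hwid (by omega); omega
  have h2 := hcols c hcL
  rcases Nat.lt_or_ge j (colBot D c) with hbj | hbj
  · exact ⟨hcL, h2.1, by omega⟩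
  · have hbc : InDiag D (colBot D c) c := (InDiag_iff_col hD).mpr ⟨le_refl _, h2.1⟩
    have hbs : sR D (colBot D c) ≤ c := hbc.2.1
    have hsm : sR D j ≤ sR D (colBot D c) := sk_s_mono hD hbj hj
    have h3 : InDiag D j c := InDiag_def.mpr ⟨hj, by omega, hc⟩
    exact ⟨hcL, h2.1, ((InDiag_iff_col hD).mp h3).2⟩

lemma InDiag_Tj {k : ℕ} {L : List ℕ} {D : List (ℕ × ℕ)} (hG : Good k L D)
    {j c x : ℕ} : InDiag (Tj D j) c x ↔ InDiag D (x + j) c := by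
  have hD := hG.1
  constructor
  · intro hin
    have hc : c < Kj D j := by rw [← Tj_length]; exact hin.1
    have hjlen : j < D.length := by
      by_contra hx
      rw [Kj, if_neg hx] at hc
      omega
    have hK : Kj D j = eR D j := by rw [Kj, if_pos hjlen]
    have hce : c < eR D j := by omega
    obtain ⟨hcL, hbt, hjt⟩ := tj_col_facts hG hjlen hce
    have hrow := rowOf_Tj (D := D) (j := j) hc
    have h2 : (rowOf (Tj D j) c).1 ≤ x := hin.2.1
    have h3 : x < (rowOf (Tj D j) c).1 + (rowOf (Tj D j) c).2 := hin.2.2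
    rw [hrow] at h2 h3
    simp only at h2 h3
    rw [InDiag_iff_col hD]
    omega
  · intro hin
    have hr : x + j < D.length := hin.1
    have hjlen : j < D.length := by omega
    obtain ⟨hb, ht⟩ := (InDiag_iff_col hD).mp hin
    have hce : c < eR D (x + j) := hin.2.2
    have hmono : eR D (x + j) ≤ eR D j := sk_e_mono hD (by omega) hr
    have hc : c < Kj D j := by rw [Kj, if_pos hjlen]; omega
    have hrow := rowOf_Tj (D := D) (j := j) hc
    refine InDiag_def.mpr ⟨by rw [Tj_length]; exact hc, ?_, ?_⟩
    · show (rowOf (Tj D j) c).1 ≤ x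
      rw [hrow]
      simp only
      omega
    · show x < eR (Tj D j) c
      show x < (rowOf (Tj D j) c).1 + (rowOf (Tj D j) c).2
      rw [hrow]
      simp only
      omega

lemma tj_skew {k : ℕ} {L : List ℕ} {D : List (ℕ × ℕ)} (hG : Good k L D) (j : ℕ) :
    IsSkewRows (Tj D j) := by
  have hD := hG.1
  apply isSkewRows_of
  · intro c hc
    rw [Tj_length] at hc
    have hjlen : j < D.length := by
      by_contra hx; rw [Kj, if_neg hx] at hc; omega
    have hce : c < eR D j := by rw [Kj, if_pos hjlen] at hc; omega
    obtain ⟨hcL, hbt, hjt⟩ := tj_col_facts hG hjlen hce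
    show 0 < (rowOf (Tj D j) c).2
    rw [rowOf_Tj hc]
    simp only
    omega
  · intro c hc
    rw [Tj_length] at hc
    have hjlen : j < D.length := by
      by_contra hx; rw [Kj, if_neg hx] at hc; omega
    have hc1 : c + 1 < Kj D j := hc
    have hc0 : c < Kj D j := by omega
    have hce1 : c + 1 < eR D j := by rw [Kj, if_pos hjlen] at hc1; omega
    have hce0 : c < eR D j := by omega
    obtain ⟨hcL0, hbt0, hjt0⟩ := tj_col_facts hG hjlen hce0
    obtain ⟨hcL1, hbt1, hjt1⟩ := tj_col_facts hG hjlen hce1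
    have hba := bot_antitone hD hbt0 hbt1
    have hta := top_antitone hD hbt0 hbt1
    have r0 := rowOf_Tj (D := D) (j := j) hc0
    have r1 := rowOf_Tj (D := D) (j := j) hc1
    constructor
    · show (rowOf (Tj D j) (c+1)).1 ≤ (rowOf (Tj D j) c).1
      rw [r0, r1]
      simp only
      omega
    · show eR (Tj D j) (c+1) ≤ eR (Tj D j) c
      show (rowOf (Tj D j) (c+1)).1 + (rowOf (Tj D j) (c+1)).2 ≤
        (rowOf (Tj D j) c).1 + (rowOf (Tj D j) c).2
      rw [r0, r1]
      simp only
      omega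

lemma hook_Tj {k : ℕ} {L : List ℕ} {D : List (ℕ × ℕ)} (hG : Good k L D)
    {j c x : ℕ} (hin : InDiag (Tj D j) c x) :
    hookLen (Tj D j) c x = hookLen D (x + j) c := by
  have hD := hG.1
  have hT := tj_skew hG j
  have hinD := (InDiag_Tj hG).mp hin
  have hc : c < Kj D j := by rw [← Tj_length]; exact hin.1
  have hjlen : j < D.length := by
    by_contra hx; rw [Kj, if_neg hx] at hc; omega
  have hce : c < eR D j := by rw [Kj, if_pos hjlen] at hc; omega
  obtain ⟨hcL, hbt, hjt⟩ := tj_col_facts hG hjlen hce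
  obtain ⟨hbx, htx⟩ := (InDiag_iff_col hD).mp hinD
  -- arm of Tj
  have harm : armLen (Tj D j) c x = legLen D (x+j) c := by
    rw [armLen_eq, legLen_eq hD hinD]
    show (rowOf (Tj D j) c).1 + (rowOf (Tj D j) c).2 - 1 - x = _
    rw [rowOf_Tj hc]
    simp only
    omega
  -- leg of Tj
  have hleg : legLen (Tj D j) c x = armLen D (x+j) c := by
    rw [armLen_eq]
    have hset : ((Finset.range (Tj D j).length).filter fun c' =>
        c < c' ∧ (rowOf (Tj D j) c').1 ≤ x ∧
          x < (rowOf (Tj D j) c').1 + (rowOf (Tj D j) c').2)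
        = Finset.Ico (c+1) (eR D (x+j)) := by
      ext c'
      simp only [Finset.mem_filter, Finset.mem_range, Finset.mem_Ico]
      constructor
      · rintro ⟨hl, hcc, hs2, he2⟩
        have : InDiag (Tj D j) c' x := ⟨hl, hs2, he2⟩
        have hD2 := (InDiag_Tj hG).mp this
        exact ⟨by omega, hD2.2.2⟩
      · rintro ⟨h1, h2⟩
        have hsx : sR D (x+j) ≤ c := hinD.2.1
        have : InDiag D (x+j) c' := InDiag_def.mpr ⟨hinD.1, by omega, h2⟩
        have hT2 := (InDiag_Tj hG).mpr this
        exact ⟨hT2.1, by omega, hT2.2.1, hT2.2.2⟩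
    rw [legLen, hset, Nat.card_Ico]
    have : c < eR D (x+j) := hinD.2.2
    omega
  rw [hookLen, hookLen, harm, hleg, armLen_eq, legLen_eq hD hinD]
  omega

lemma tj_hookBounded {k : ℕ} {L : List ℕ} {D : List (ℕ × ℕ)} (hG : Good k L D) (j : ℕ) :
    HookBounded k (Tj D j) := by
  intro c x hin
  rw [hook_Tj hG hin]
  exact hG.2.1 _ _ ((InDiag_Tj hG).mp hin)

lemma good_top_start {k : ℕ} {L : List ℕ} {D : List (ℕ × ℕ)} (hG : Good k L D)
    (hl : 0 < D.length) : sR D (D.length - 1) = 0 := by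
  have hD := hG.1
  have hwid := hG.2.2.2.1
  have hcols := hG.2.2.2.2.1
  have hpos := sk_pos hD (show 0 < D.length by omega)
  have hL0 : 0 < L.length := by
    have := hwid hl
    simp only [eR, lR] at *
    omega
  have h2 := hcols 0 hL0
  have ht0 : colTop D 0 = D.length := colTop_zero hD
  have : InDiag D (D.length - 1) 0 := (InDiag_iff_col hD).mpr ⟨by omega, by omega⟩
  have := this.2.1
  simp only [sR]
  omega

/-! ### The induction step on the transpose side -/

lemma tj_clause1 {k : ℕ} {L : List ℕ} {D : List (ℕ × ℕ)} (hG : Good k L D)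
    {j : ℕ} (hj : j < D.length) :
    ∀ i, sR D j ≤ i → i < sR D j + lR D j → i < (Tj D (j+1)).length →
      (rowOf (Tj D (j+1)) i).1 = 0 := by
  have hD := hG.1
  intro i h1 h2 h3
  rw [Tj_length] at h3
  have hsum : sR D j + lR D j = eR D j := rfl
  have hinDji : InDiag D j i := InDiag_def.mpr ⟨hj, h1, by omega⟩
  have hbi : colBot D i ≤ j := ((InDiag_iff_col hD).mp hinDji).1
  rw [rowOf_Tj h3]
  simp only
  omega

lemma addCol_Tj {k : ℕ} {L : List ℕ} {D : List (ℕ × ℕ)} (hG : Good k L D)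
    {j : ℕ} (hj : j < D.length) :
    addCol (lR D j) (sR D j) (Tj D (j+1)) = Tj D j := by
  have hD := hG.1
  have hm : 0 < lR D j := sk_pos hD hj
  have hsum : sR D j + lR D j = eR D j := rfl
  have hK1 : Kj D (j+1) ≤ eR D j := by
    rw [Kj]
    split
    · exact sk_e_mono hD (by omega) (by assumption)
    · omega
  have hKj : Kj D j = eR D j := by rw [Kj, if_pos hj]
  have hlen : (addCol (lR D j) (sR D j) (Tj D (j+1))).length = eR D j := by
    rw [addCol_length, Tj_length]
    omega
  apply List.ext_getElem
  · rw [hlen, Tj_length, hKj]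
  · intro i h1 h2
    rw [← rowOf_lt h1, ← rowOf_lt h2]
    rw [hlen] at h1
    have hiK : i < Kj D j := by omega
    rw [rowOf_Tj hiK]
    have hi' : i < max (Tj D (j+1)).length (sR D j + lR D j) := by
      rw [Tj_length]; omega
    rw [rowOf_addCol hi']
    by_cases hcol : sR D j ≤ i ∧ i < sR D j + lR D j
    · rw [if_pos hcol]
      have hinDji : InDiag D j i := InDiag_def.mpr ⟨hj, hcol.1, by omega⟩
      have hbi : colBot D i ≤ j := ((InDiag_iff_col hD).mp hinDji).1
      have hti : j < colTop D i := ((InDiag_iff_col hD).mp hinDji).2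
      by_cases hiK1 : i < (Tj D (j+1)).length
      · rw [if_pos hiK1]
        rw [Tj_length] at hiK1
        have heT : eR (Tj D (j+1)) i = colTop D i - (j+1) := by
          show (rowOf (Tj D (j+1)) i).1 + (rowOf (Tj D (j+1)) i).2 = _
          rw [rowOf_Tj hiK1]
          simp only
          omega
        have hti2 : j + 1 < colTop D i := by
          have hj1 : j + 1 < D.length := by
            by_contra hy
            rw [Kj, if_neg hy] at hiK1
            omega
          rw [Kj, if_pos hj1] at hiK1
          have hsm := sk_s_mono hD (show j ≤ j+1 by omega) hj1
          have hsj : sR D j ≤ i := hcol.1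
          have hI : InDiag D (j+1) i := InDiag_def.mpr ⟨hj1, by omega, hiK1⟩
          exact ((InDiag_iff_col hD).mp hI).2
        rw [heT]
        simp only [Prod.mk.injEq]
        constructor <;> omega
      · rw [if_neg hiK1]
        rw [Tj_length] at hiK1
        have hti2 : colTop D i ≤ j + 1 := by
          by_contra hx
          push_neg at hx
          have hI : InDiag D (j+1) i := (InDiag_iff_col hD).mpr ⟨by omega, by omega⟩
          have hj1 : j+1 < D.length := hI.1
          have hIe : i < eR D (j+1) := hI.2.2
          rw [Kj, if_pos hj1] at hiK1
          omega
        simp only [Prod.mk.injEq]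
        constructor <;> omega
    · rw [if_neg hcol]
      have his : i < sR D j := by omega
      have hce : i < eR D j := by omega
      obtain ⟨hcL, hbt, hjt⟩ := tj_col_facts hG hj hce
      have hbc : InDiag D (colBot D i) i := (InDiag_iff_col hD).mpr ⟨le_refl _, hbt⟩
      have hbge : j + 1 ≤ colBot D i := by
        by_contra hx
        push_neg at hx
        have hbs : sR D (colBot D i) ≤ i := hbc.2.1
        have := sk_s_mono hD (show colBot D i ≤ j by omega) hj
        omega
      have hblen : colBot D i < D.length := hbc.1
      have hj1 : j + 1 < D.length := by omega
      have hemono : eR D (colBot D i) ≤ eR D (j+1) := sk_e_mono hD (by omega) hblen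
      have hie : i < eR D (colBot D i) := hbc.2.2
      have hiK1 : i < Kj D (j+1) := by rw [Kj, if_pos hj1]; omega
      have hrT := rowOf_Tj (D := D) (j := j+1) hiK1
      have hsT : sR (Tj D (j+1)) i = colBot D i - (j+1) := by
        show (rowOf (Tj D (j+1)) i).1 = _
        rw [hrT]
        simp only
        omega
      have hlT : lR (Tj D (j+1)) i = colTop D i - colBot D i := by
        show (rowOf (Tj D (j+1)) i).2 = _
        rw [hrT]
        simp only
        omega
      rw [hsT, hlT]
      simp only [Prod.mk.injEq]
      constructor <;> omega

lemma tj_min {k : ℕ} {L : List ℕ} {D : List (ℕ × ℕ)} (hG : Good k L D)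
    (hsorted : L.Pairwise (· ≥ ·)) {j : ℕ} (hj : j < D.length)
    {h' : ℕ} (hh' : h' < sR D j) : ¬ ColValid k (lR D j) h' (Tj D (j+1)) := by
  have hD := hG.1
  rintro ⟨C1, SK, HB⟩
  have hm : 0 < lR D j := sk_pos hD hj
  have hsum : sR D j + lR D j = eR D j := rfl
  have hspos : 0 < sR D j := by omega
  have hj1 : j + 1 < D.length := by
    by_contra hx
    have hts := good_top_start hG (by omega)
    have : j = D.length - 1 := by omega
    rw [← this] at hts
    omega
  have hK : (Tj D (j+1)).length = eR D (j+1) := by rw [Tj_length, Kj, if_pos hj1]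
  have hov : sR D j ≤ eR D (j+1) := by
    by_contra hx
    push_neg at hx
    have hce : sR D j - 1 < eR D j := by omega
    obtain ⟨hcL, hbt, hjt⟩ := tj_col_facts hG hj hce
    have hbc : InDiag D (colBot D (sR D j - 1)) (sR D j - 1) :=
      (InDiag_iff_col hD).mpr ⟨le_refl _, hbt⟩
    have hbge : j + 1 ≤ colBot D (sR D j - 1) := by
      by_contra hy
      push_neg at hy
      have hbs : sR D (colBot D (sR D j - 1)) ≤ sR D j - 1 := hbc.2.1
      have := sk_s_mono hD (show colBot D (sR D j - 1) ≤ j by omega) hj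
      omega
    have hblen : colBot D (sR D j - 1) < D.length := hbc.1
    have hemono : eR D (colBot D (sR D j - 1)) ≤ eR D (j+1) :=
      sk_e_mono hD (by omega) hblen
    have h99 : sR D j - 1 < eR D (colBot D (sR D j - 1)) := hbc.2.2
    omega
  have hF1 : eR D (j+1) ≤ h' + lR D j := by
    by_contra hx
    push_neg at hx
    have hadj := (sk_adj SK (i := h' + lR D j - 1) (by
      rw [addCol_length, hK]; omega)).1
    have e1 : h' + lR D j - 1 + 1 = h' + lR D j := by omega
    rw [e1] at hadj
    have h2 : sR (addCol (lR D j) h' (Tj D (j+1))) (h'+lR D j-1) = 0 :=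
      sR_addCol_col0 (by omega) (by omega)
    have h3 : sR (addCol (lR D j) h' (Tj D (j+1))) (h'+lR D j) =
        sR (Tj D (j+1)) (h'+lR D j) + 1 :=
      sR_addCol_out (by omega) (by rw [hK]; omega)
    omega
  -- the column c* = sR D j - 1
  have hce0 : sR D j - 1 < eR D j := by omega
  obtain ⟨hcL0, hbt0, hjt0⟩ := tj_col_facts hG hj hce0
  have hbc0 : InDiag D (colBot D (sR D j - 1)) (sR D j - 1) :=
    (InDiag_iff_col hD).mpr ⟨le_refl _, hbt0⟩
  have hbge0 : j + 1 ≤ colBot D (sR D j - 1) := by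
    by_contra hy
    push_neg at hy
    have hbs : sR D (colBot D (sR D j - 1)) ≤ sR D j - 1 := hbc0.2.1
    have := sk_s_mono hD (show colBot D (sR D j - 1) ≤ j by omega) hj
    omega
  have hble0 : colBot D (sR D j - 1) ≤ j + 1 := by
    have hc2 := C1 (sR D j - 1) (by omega) (by omega) (by rw [hK]; omega)
    rw [rowOf_Tj (show sR D j - 1 < Kj D (j+1) by rw [Kj, if_pos hj1]; omega)] at hc2
    simp only at hc2
    omega
  have hbeq0 : colBot D (sR D j - 1) = j + 1 := by omega
  have hG4 := hG.2.2.2.2.2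
  have hkey : k < L.getD (sR D j - 1) 0 + lR D (j+1-1) :=
    hG4 (j+1) (sR D j - 1) (by omega) hj1
      (by simp only [Nat.add_sub_cancel]; omega) hbeq0
  rw [Nat.add_sub_cancel] at hkey
  -- the column h'
  have hceh : h' < eR D j := by omega
  obtain ⟨hcLh, hbth, hjth⟩ := tj_col_facts hG hj hceh
  have hbch : InDiag D (colBot D h') h' := (InDiag_iff_col hD).mpr ⟨le_refl _, hbth⟩
  have hbgeh : j + 1 ≤ colBot D h' := by
    by_contra hy
    push_neg at hy
    have hbs : sR D (colBot D h') ≤ h' := hbch.2.1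
    have := sk_s_mono hD (show colBot D h' ≤ j by omega) hj
    omega
  have hbleh : colBot D h' ≤ j + 1 := by
    have hc2 := C1 h' (le_refl _) (by omega) (by rw [hK]; omega)
    rw [rowOf_Tj (show h' < Kj D (j+1) by rw [Kj, if_pos hj1]; omega)] at hc2
    simp only at hc2
    omega
  have hbeqh : colBot D h' = j + 1 := by omega
  have hcolsh := hG.2.2.2.2.1 h' hcLh
  -- sortedness
  have hsort2 : L.getD (sR D j - 1) 0 ≤ L.getD h' 0 := by
    rcases Nat.eq_or_lt_of_le (show h' ≤ sR D j - 1 by omega) with heq | hlt2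
    · rw [heq]
    · have hrel := List.Pairwise.rel_get_of_lt hsorted
        (a := ⟨h', by omega⟩) (b := ⟨sR D j - 1, hcL0⟩) (by simpa using hlt2)
      rw [List.getD_eq_getElem _ _ hcL0, List.getD_eq_getElem _ _ hcLh]
      simpa using hrel
  -- the hook at (h', 0)
  have hhook := hookLen_addCol_zero SK hm (le_refl h')
    (show h' < h' + lR D j by omega)
  rw [if_pos (by rw [hK]; omega)] at hhook
  have heTh : eR (Tj D (j+1)) h' = L.getD h' 0 := by
    show (rowOf (Tj D (j+1)) h').1 + (rowOf (Tj D (j+1)) h').2 = _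
    rw [rowOf_Tj (show h' < Kj D (j+1) by rw [Kj, if_pos hj1]; omega)]
    simp only
    omega
  rw [heTh] at hhook
  have hInA : InDiag (addCol (lR D j) h' (Tj D (j+1))) h' 0 :=
    (InDiag_addCol_zero SK hm).mpr ⟨le_refl _, by omega⟩
  have hfin := HB h' 0 hInA
  omega

lemma tj_step {k : ℕ} {L : List ℕ} {D : List (ℕ × ℕ)} (hG : Good k L D)
    (hsorted : L.Pairwise (· ≥ ·)) {j : ℕ} (hj : j < D.length) :
    kMul k (lR D j) (Tj D (j+1)) = Tj D j := by
  have hS1 := addCol_Tj hG hj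
  have hval : ColValid k (lR D j) (sR D j) (Tj D (j+1)) := by
    refine ⟨tj_clause1 hG hj, ?_, ?_⟩
    · rw [hS1]; exact tj_skew hG j
    · rw [hS1]; exact tj_hookBounded hG j
  have hsinf : sInf {h | ColValid k (lR D j) h (Tj D (j+1))} = sR D j := by
    have h1 : sInf {h | ColValid k (lR D j) h (Tj D (j+1))} ≤ sR D j := Nat.sInf_le hval
    have h2m : sInf {h | ColValid k (lR D j) h (Tj D (j+1))}
        ∈ {h | ColValid k (lR D j) h (Tj D (j+1))} :=
      Nat.sInf_mem ⟨sR D j, hval⟩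
    have h2 : ColValid k (lR D j) (sInf {h | ColValid k (lR D j) h (Tj D (j+1))})
        (Tj D (j+1)) := h2m
    rcases Nat.eq_or_lt_of_le h1 with he | hlt
    · exact he
    · exact absurd h2 (tj_min hG hsorted hj hlt)
  rw [kMul, hsinf, hS1]

lemma tj_main {k : ℕ} {L : List ℕ} {D : List (ℕ × ℕ)} (hG : Good k L D)
    (hsorted : L.Pairwise (· ≥ ·)) :
    ∀ i, i ≤ D.length →
      kSkewDiagram k ((D.map Prod.snd).drop (D.length - i)) = Tj D (D.length - i) := by
  intro i
  induction i with
  | zero =>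
    intro _
    rw [Nat.sub_zero, List.drop_of_length_le (le_of_eq (by simp))]
    show ([] : List (ℕ × ℕ)) = _
    simp [Tj, Kj]
  | succ i ih =>
    intro hi
    have hj : D.length - (i+1) < D.length := by omega
    have hd : (D.map Prod.snd).drop (D.length - (i+1)) =
        lR D (D.length - (i+1)) :: (D.map Prod.snd).drop (D.length - (i+1) + 1) := by
      rw [List.drop_eq_getElem_cons (by rw [List.length_map]; omega)]
      congr 1
      rw [List.getElem_map]
      show D[D.length - (i+1)].2 = (rowOf D (D.length - (i+1))).2
      rw [rowOf_lt hj]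
    rw [hd]
    show kMul k (lR D (D.length - (i+1)))
      (kSkewDiagram k ((D.map Prod.snd).drop (D.length - (i+1) + 1))) = _
    have he : D.length - (i+1) + 1 = D.length - i := by omega
    rw [he, ih (by omega), ← he]
    exact tj_step hG hsorted hj

/-- For a `k`-bounded partition `λ` with `k`-conjugate
`μ = λ^{ω_k}`, the conjugate (transpose across the main diagonal, i.e. the image
of the cell set under swapping coordinates) of the skew diagram `D(λ)` equals the
skew diagram `D(μ)`. -/
theorem kSkewDiagram_transpose (k : ℕ) (hk : 0 < k) (l : List ℕ)
    (hl : IsKBoundedPartition k l) :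
    (cellsOf (kSkewDiagram k l)).image Prod.swap =
      cellsOf (kSkewDiagram k (kConjugate k l)) := by
  have hG := good_kSkew hk hl
  have hsorted := hl.1.1
  have hmain := tj_main hG hsorted (kSkewDiagram k l).length (le_refl _)
  rw [Nat.sub_self, List.drop_zero] at hmain
  show _ = cellsOf (kSkewDiagram k ((kSkewDiagram k l).map Prod.snd))
  rw [hmain]
  ext p
  obtain ⟨x, y⟩ := p
  simp only [Finset.mem_image]
  constructor
  · rintro ⟨q, hab, hswap⟩
    have hq : q = (y, x) := by
      have h2 := congrArg Prod.swap hswap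
      rw [Prod.swap_swap] at h2
      rw [h2]
      rfl
    subst hq
    rw [mem_cellsOf] at hab ⊢
    have := (InDiag_Tj hG (j := 0) (c := x) (x := y)).mpr (by simpa using hab)
    simpa using this
  · intro hmem
    refine ⟨(y, x), ?_, rfl⟩
    rw [mem_cellsOf] at hmem ⊢
    have := (InDiag_Tj hG (j := 0) (c := x) (x := y)).mp (by simpa using hmem)
    simpa using this
end

section
/- Let λ be a partition with n parts and main hook-length h_M(λ) = λ_1 + n − 1. If k ≥ h_M(λ), then the k-conjugate of λ equals the ordinary conjugate: λ^{ω_k} = λ′, where λ′_j is the number of parts of λ that are at least j. -/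
/-- The ordinary conjugate of a partition `l` (a weakly decreasing list of
positive integers, so that `l.headI = l₁` is the largest part): its `j`-th part
is the number of parts of `l` that are at least `j`. -/
def conjugateList (l : List ℕ) : List ℕ :=
  (List.range l.headI).map fun j => (l.filter fun x => decide (j < x)).length

/-! ### Auxiliary material -/

/-- number of parts of `l` greater than `j` -/
def cnt (l : List ℕ) (j : ℕ) : ℕ := (l.filter fun x => decide (j < x)).length

/-- the "straight" diagram of the conjugate of `l` -/
def SD (l : List ℕ) : List (ℕ × ℕ) :=
  (List.range l.headI).map fun j => (0, cnt l j)

lemma SD_length (l : List ℕ) : (SD l).length = l.headI := by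
  simp [SD]

lemma rowOf_SD {l : List ℕ} {i : ℕ} (hi : i < l.headI) :
    rowOf (SD l) i = (0, cnt l i) := by
  rw [rowOf, List.getD_eq_getElem _ _ (by simpa [SD] using hi)]
  simp [SD]

lemma le_headI_of_mem {l : List ℕ} (hl : l.Pairwise (· ≥ ·)) {x : ℕ} (hx : x ∈ l) :
    x ≤ l.headI := by
  cases l with
  | nil => simp at hx
  | cons a t =>
    rcases List.mem_cons.mp hx with h | h
    · simp [h]
    · exact (List.pairwise_cons.mp hl).1 x h

lemma cnt_anti (l : List ℕ) {j j' : ℕ} (h : j ≤ j') : cnt l j' ≤ cnt l j := by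
  simp only [cnt, ← List.countP_eq_length_filter]
  apply List.countP_mono_left
  intro x _ hx
  simp only [decide_eq_true_eq] at *
  omega

lemma cnt_le_length (l : List ℕ) (j : ℕ) : cnt l j ≤ l.length :=
  List.length_filter_le _ _

lemma cnt_pos {l : List ℕ} {j : ℕ} (hj : j < l.headI) : 0 < cnt l j := by
  cases l with
  | nil => simp at hj
  | cons a t =>
    simp only [List.headI] at hj
    simp [cnt, List.filter_cons, hj]

lemma cnt_zero {l : List ℕ} (hl : ∀ x ∈ l, 0 < x) : cnt l 0 = l.length := by
  unfold cnt
  rw [List.filter_eq_self.mpr]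
  intro a ha
  simpa using hl a ha

lemma cnt_eq_zero {l : List ℕ} {j : ℕ} (h : ∀ x ∈ l, x ≤ j) : cnt l j = 0 := by
  unfold cnt
  rw [List.filter_eq_nil_iff.mpr]
  · rfl
  intro a ha
  simpa using h a ha

/-- The straight diagram is a skew diagram. -/
lemma isSkewRows_SD {l : List ℕ} (hl : IsPartitionList l) : IsSkewRows (SD l) := by
  constructor
  · intro r hr
    simp only [SD, List.mem_map, List.mem_range] at hr
    obtain ⟨j, hj, rfl⟩ := hr
    exact cnt_pos hj
  · refine List.isChain_iff_getElem.mpr ?_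
    intro i h
    simp only [SD, List.length_map, List.length_range] at h
    have hg : ∀ (t : ℕ) (ht : t < (SD l).length), (SD l)[t]'ht = (0, cnt l t) := by
      intro t ht
      simp [SD]
    rw [hg, hg]
    exact ⟨le_refl 0, by simpa using cnt_anti l (Nat.le_succ i)⟩

lemma hookBounded_SD {k : ℕ} {l : List ℕ} (hl : IsPartitionList l)
    (hM : l.headI + l.length ≤ k + 1) : HookBounded k (SD l) := by
  intro i j hij
  obtain ⟨hi, hj1, hj2⟩ := hij
  rw [SD_length] at hi
  rw [rowOf_SD hi] at hj1 hj2
  simp only at hj1 hj2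
  have harm : armLen (SD l) i j ≤ l.length - 1 := by
    rw [armLen, rowOf_SD hi]
    have := cnt_le_length l i
    simp only
    omega
  have hleg : legLen (SD l) i j ≤ l.headI - 1 - i := by
    rw [legLen]
    calc ((Finset.range (SD l).length).filter fun i' =>
          i < i' ∧ (rowOf (SD l) i').1 ≤ j ∧ j < (rowOf (SD l) i').1 + (rowOf (SD l) i').2).card
        ≤ (Finset.Ioo i l.headI).card := by
          apply Finset.card_le_card
          intro x hx
          simp only [Finset.mem_filter, Finset.mem_range, SD_length] at hx
          simp only [Finset.mem_Ioo]
          exact ⟨hx.2.1, hx.1⟩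
      _ = l.headI - i - 1 := by rw [Nat.card_Ioo]
      _ ≤ l.headI - 1 - i := by omega
  have hlen : 0 < l.length := by
    cases l with
    | nil => simp at hi
    | cons a t => simp
  rw [hookLen]
  omega

lemma addCol_zero_SD {m : ℕ} {rest : List ℕ} (hm : 0 < m)
    (hrest : rest.Pairwise (· ≥ ·)) (hhead : rest.headI ≤ m) :
    addCol m 0 (SD rest) = SD (m :: rest) := by
  have hlen : (SD rest).length = rest.headI := SD_length rest
  have hmax : max (SD rest).length (0 + m) = m := by
    rw [hlen]; omega
  rw [addCol, hmax]
  conv_rhs => rw [SD]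
  simp only [List.headI]
  apply List.map_congr_left
  intro i hi
  rw [List.mem_range] at hi
  have hcond : 0 ≤ i ∧ i < 0 + m := ⟨Nat.zero_le _, by omega⟩
  rw [if_pos hcond]
  by_cases hil : i < (SD rest).length
  · rw [if_pos hil]
    rw [hlen] at hil
    rw [rowOf_SD hil]
    have : cnt (m :: rest) i = cnt rest i + 1 := by
      simp [cnt, List.filter_cons, hi]
    simp [this]
  · rw [if_neg hil]
    rw [hlen] at hil
    have : cnt rest i = 0 := by
      apply cnt_eq_zero
      intro x hx
      exact le_trans (le_headI_of_mem hrest hx) (by omega)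
    have h2 : cnt (m :: rest) i = 1 := by
      simp [cnt, List.filter_cons, hi, show (rest.filter fun x => decide (i < x)).length = 0 from this]
    simp [h2]

lemma colValid_zero {k m : ℕ} {rest : List ℕ} (hm : 0 < m)
    (hpart : IsPartitionList (m :: rest)) (hhead : rest.headI ≤ m)
    (hM : m + (rest.length + 1) ≤ k + 1) :
    ColValid k m 0 (SD rest) := by
  have hrest : rest.Pairwise (· ≥ ·) := (List.pairwise_cons.mp hpart.1).2
  have heq := addCol_zero_SD hm hrest hhead
  refine ⟨?_, ?_, ?_⟩
  · intro i _ _ hi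
    rw [SD_length] at hi
    rw [rowOf_SD hi]
  · rw [heq]; exact isSkewRows_SD hpart
  · rw [heq]
    apply hookBounded_SD hpart
    simpa using hM

lemma kSkew_eq_SD (k : ℕ) (hk : 0 < k) :
    ∀ l : List ℕ, IsPartitionList l → l.headI + l.length ≤ k + 1 →
      kSkewDiagram k l = SD l := by
  intro l
  induction l with
  | nil => intro _ _; simp [kSkewDiagram, SD]
  | cons m rest ih =>
    intro hpart hM
    have hsorted := hpart.1
    have hpos := hpart.2
    have hm : 0 < m := hpos m List.mem_cons_self
    have hhead : rest.headI ≤ m := by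
      cases rest with
      | nil => simpa using hm.le.trans (le_refl m) |>.trans (le_refl m) -- headI [] = 0
      | cons a t => exact (List.pairwise_cons.mp hsorted).1 a List.mem_cons_self
    have hrestpart : IsPartitionList rest :=
      ⟨(List.pairwise_cons.mp hsorted).2, fun x hx => hpos x (List.mem_cons_of_mem _ hx)⟩
    have hMl : (m :: rest).headI + (m :: rest).length = m + (rest.length + 1) := by simp
    have hrestM : rest.headI + rest.length ≤ k + 1 := by
      simp only [hMl] at hM
      omega
    rw [kSkewDiagram, ih hrestpart hrestM, kMul]
    have hvalid : ColValid k m 0 (SD rest) :=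
      colValid_zero hm hpart hhead (by simpa [hMl] using hM)
    have hinf : sInf {h | ColValid k m h (SD rest)} = 0 :=
      Nat.sInf_eq_zero.mpr (Or.inl hvalid)
    rw [hinf]
    exact addCol_zero_SD hm (List.pairwise_cons.mp hsorted).2 hhead

/-- If `λ` is a partition with `n` parts and main hook-length
`h_M(λ) = λ₁ + n - 1`, and `k ≥ h_M(λ)`, then the `k`-conjugate of `λ` equals
its ordinary conjugate. -/
theorem kConjugate_eq_conjugate_of_large (k : ℕ) (hk : 0 < k) (l : List ℕ)
    (hl : IsPartitionList l) (hM : l.headI + l.length ≤ k + 1) :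
    kConjugate k l = conjugateList l := by
  rw [kConjugate, kSkew_eq_SD k hk l hl hM, SD, conjugateList, List.map_map]
  rfl
end

section
/- Every k-bounded partition μ can be written as the partition rearrangement (multiset union of parts) μ = λ ∪ R_1 ∪ ⋯ ∪ R_n of a k-irreducible partition λ and finitely many k-rectangles R_1,…,R_n, and this decomposition is unique: λ and the multiset {R_1,…,R_n} of k-rectangles are uniquely determined by μ. -/
lemma count_sum_replicate (g : ℕ → ℕ) (k x : ℕ) :
    (∑ j ∈ Finset.range (k + 1), Multiset.replicate (g j) j).count x
      = if x ≤ k then g x else 0 := by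
  rw [Multiset.count_sum']
  simp only [Multiset.count_replicate]
  rw [Finset.sum_ite_eq']
  simp [Nat.lt_succ_iff]

lemma count_rect_sum (k x : ℕ) (S : Multiset ℕ) :
    ((S.map fun ℓ => Multiset.replicate (k + 1 - ℓ) ℓ).sum).count x
      = S.count x * (k + 1 - x) := by
  induction S using Multiset.induction with
  | empty => simp
  | cons a s ih =>
    simp only [Multiset.map_cons, Multiset.sum_cons, Multiset.count_add, ih,
      Multiset.count_cons, Multiset.count_replicate]
    by_cases h : x = a
    · simp [h, add_mul, add_comm]
    · simp only [if_neg h, add_zero]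
      rw [if_neg (fun hh : a = x => h hh.symm), zero_add]



/-- A `k`-bounded partition is `k`-irreducible if, for each `j = 1, …, k`, it has
at most `k - j` parts equal to `j` (in particular no part equal to `k`). -/
def IsKIrreducible (k : ℕ) (l : List ℕ) : Prop :=
  IsKBoundedPartition k l ∧ ∀ j, 1 ≤ j → j ≤ k → l.count j ≤ k - j

/-- Every `k`-bounded partition `μ` can be written as the partition
rearrangement (multiset union of parts) `μ = λ ∪ R_1 ∪ ⋯ ∪ R_n` of a
`k`-irreducible partition `λ` and finitely many `k`-rectangles (the
`k`-rectangle `(ℓ^{k+1-ℓ})`, `1 ≤ ℓ ≤ k`, being recorded by its column height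
`ℓ`, contributing `k+1-ℓ` parts equal to `ℓ`), and this decomposition is unique:
`λ` and the multiset of `k`-rectangles are uniquely determined by `μ`. -/
theorem kRectangle_decomposition (k : ℕ) (hk : 0 < k) (μ : List ℕ)
    (hμ : IsKBoundedPartition k μ) :
    ∃! p : List ℕ × Multiset ℕ,
      IsKIrreducible k p.1 ∧ (∀ ℓ ∈ p.2, 1 ≤ ℓ ∧ ℓ ≤ k) ∧
      (↑μ : Multiset ℕ) = (↑p.1 : Multiset ℕ) +
        (p.2.map fun ℓ => Multiset.replicate (k + 1 - ℓ) ℓ).sum := by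
  obtain ⟨⟨hsort, hpos⟩, hbdd⟩ := hμ
  set c : ℕ → ℕ := fun j => μ.count j with hc
  have hc0 : c 0 = 0 :=
    List.count_eq_zero.mpr (fun h => absurd (hpos 0 h) (lt_irrefl 0))
  have hck : ∀ x, k < x → c x = 0 := fun x hx =>
    List.count_eq_zero.mpr (fun h => absurd (hbdd x h) (not_le.mpr hx))
  set Λ : Multiset ℕ :=
    ∑ j ∈ Finset.range (k + 1), Multiset.replicate (c j % (k + 1 - j)) j with hΛ
  set R : Multiset ℕ :=
    ∑ j ∈ Finset.range (k + 1), Multiset.replicate (c j / (k + 1 - j)) j with hR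
  set L : List ℕ := Λ.sort (· ≥ ·) with hL
  have hLΛ : (↑L : Multiset ℕ) = Λ := Multiset.sort_eq _ _
  have hΛcount : ∀ x, Λ.count x = if x ≤ k then c x % (k + 1 - x) else 0 :=
    fun x => count_sum_replicate _ k x
  have hRcount : ∀ x, R.count x = if x ≤ k then c x / (k + 1 - x) else 0 :=
    fun x => count_sum_replicate _ k x
  have hLcount : ∀ x, L.count x = Λ.count x := by
    intro x; rw [← Multiset.coe_count, hLΛ]
  have hmemΛ : ∀ x ∈ Λ, 1 ≤ x ∧ x ≤ k := by
    intro x hx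
    have h1 : Λ.count x ≠ 0 := Multiset.count_ne_zero.mpr hx
    rw [hΛcount] at h1
    constructor
    · rcases Nat.eq_zero_or_pos x with h0 | h0
      · exfalso; apply h1; subst h0; simp [hc0]
      · exact h0
    · by_contra hxk; exact h1 (by simp [hxk])
  have hmemR : ∀ x ∈ R, 1 ≤ x ∧ x ≤ k := by
    intro x hx
    have h1 : R.count x ≠ 0 := Multiset.count_ne_zero.mpr hx
    rw [hRcount] at h1
    constructor
    · rcases Nat.eq_zero_or_pos x with h0 | h0
      · exfalso; apply h1; subst h0; simp [hc0]
      · exact h0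
    · by_contra hxk; exact h1 (by simp [hxk])
  refine ⟨(L, R), ⟨⟨⟨⟨Multiset.pairwise_sort _ _, ?_⟩, ?_⟩, ?_⟩, ?_, ?_⟩, ?_⟩
  · intro x hx
    exact (hmemΛ x (hLΛ ▸ Multiset.mem_coe.mpr hx)).1
  · intro x hx
    exact (hmemΛ x (hLΛ ▸ Multiset.mem_coe.mpr hx)).2
  · intro j h1 h2
    rw [hLcount, hΛcount, if_pos h2]
    have := Nat.mod_lt (c j) (show 0 < k + 1 - j by omega)
    omega
  · exact hmemR
  · refine Multiset.ext.mpr fun x => ?_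
    rw [Multiset.count_add, count_rect_sum, Multiset.coe_count, Multiset.coe_count]
    show c x = L.count x + R.count x * (k + 1 - x)
    rw [hLcount, hΛcount, hRcount]
    by_cases hxk : x ≤ k
    · rw [if_pos hxk, if_pos hxk]
      exact (Nat.mod_add_div' (c x) (k + 1 - x)).symm
    · rw [if_neg hxk, if_neg hxk, hck x (not_le.mp hxk)]
      simp
  · rintro ⟨l, S⟩ ⟨⟨⟨⟨hlsort, hlpos⟩, hlbdd⟩, hlirr⟩, hS, heq⟩
    have hx : ∀ x, c x = l.count x + S.count x * (k + 1 - x) := by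
      intro x
      have h := congrArg (Multiset.count x) heq
      rwa [Multiset.count_add, count_rect_sum, Multiset.coe_count, Multiset.coe_count] at h
    have hmod : ∀ x, l.count x = Λ.count x := by
      intro x
      rw [hΛcount]
      by_cases h1 : x ≤ k
      · rw [if_pos h1]
        rcases Nat.eq_zero_or_pos x with h0 | h0
        · subst h0
          rw [List.count_eq_zero.mpr (fun h => absurd (hlpos 0 h) (lt_irrefl 0)), hc0]
          simp
        · have hle : l.count x ≤ k - x := hlirr x h0 h1
          have hlt : l.count x < k + 1 - x := by omega
          rw [hx x, Nat.add_mul_mod_self_right, Nat.mod_eq_of_lt hlt]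
      · rw [if_neg h1]
        have h2 := hx x
        have h3 := hck x (not_le.mp h1)
        omega
    have hdiv : ∀ x, S.count x = R.count x := by
      intro x
      rw [hRcount]
      by_cases h1 : x ≤ k
      · rw [if_pos h1]
        rcases Nat.eq_zero_or_pos x with h0 | h0
        · subst h0
          rw [Multiset.count_eq_zero.mpr (fun h => absurd (hS 0 h).1 (by omega)), hc0]
          simp
        · have hle : l.count x ≤ k - x := hlirr x h0 h1
          have hlt : l.count x < k + 1 - x := by omega
          rw [hx x, Nat.add_mul_div_right _ _ (show 0 < k + 1 - x by omega),
            Nat.div_eq_of_lt hlt, zero_add]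
      · rw [if_neg h1]
        exact Multiset.count_eq_zero.mpr (fun h => absurd (hS x h).2 h1)
    have hlL : l = L := by
      have hperm : List.Perm l L := by
        rw [← Multiset.coe_eq_coe]
        refine Multiset.ext.mpr fun x => ?_
        rw [Multiset.coe_count, Multiset.coe_count, hmod x, ← hLcount x]
      exact List.Perm.eq_of_pairwise' hlsort (Multiset.pairwise_sort _ _) hperm
    have hSR : S = R := Multiset.ext.mpr hdiv
    rw [Prod.mk.injEq]; exact ⟨hlL, hSR⟩
end

section
/- Let k be a positive integer and R = ℚ[h_1,…,h_k]. For each k-bounded partition λ, let ~h_λ := S_{R_1}⋯S_{R_n}·h_μ, where λ = μ ∪ R_1 ∪ ⋯ ∪ R_n is the unique decomposition of λ into a k-irreducible partition μ and k-rectangles R_1,…,R_n, each S_{R_j} is the corresponding k-rectangular Schur determinant, and h_μ = h_{μ_1}⋯h_{μ_m}. Then the family { ~h_λ : λ a k-bounded partition } is a basis of R as a ℚ-vector space. -/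
open MvPolynomial

/-- The generator `h_m` of `R = ℚ[h_1, …, h_k]` (realized as the polynomial ring
in the `k` indeterminates `X 0 = h_1, …, X (k-1) = h_k`), with the conventions
`h_0 = 1` and `h_m = 0` for `m < 0` or `m > k`. -/
noncomputable def hElem (k : ℕ) (m : ℤ) : MvPolynomial (Fin k) ℚ :=
  if hm : 1 ≤ m ∧ m ≤ (k : ℤ) then X ⟨m.toNat - 1, by omega⟩
  else if m = 0 then 1 else 0

/-- The `k`-rectangular Schur polynomial `S_{(ℓ^{k+1-ℓ})}`, given by the
Jacobi–Trudi determinant `det (h_{ℓ - i + j})_{1 ≤ i, j ≤ k+1-ℓ}`. -/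
noncomputable def rectSchur (k ℓ : ℕ) : MvPolynomial (Fin k) ℚ :=
  (Matrix.of fun i j : Fin (k + 1 - ℓ) =>
    hElem k ((ℓ : ℤ) - (((i : ℕ) : ℤ) + 1) + (((j : ℕ) : ℤ) + 1))).det

/-- The ideal `I_k` of `R = ℚ[h_1, …, h_k]` generated by the `k`-rectangular
Schur polynomials `S_{(ℓ^{k+1-ℓ})}`, `ℓ = 1, …, k`. -/
noncomputable def rectIdeal (k : ℕ) : Ideal (MvPolynomial (Fin k) ℚ) :=
  Ideal.span (rectSchur k '' Set.Icc 1 k)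

/-- For a `k`-bounded partition `λ = (λ_1, …, λ_n)`, the product
`h_λ = h_{λ_1} ⋯ h_{λ_n}`. -/
noncomputable def hProd (k : ℕ) (l : List ℕ) : MvPolynomial (Fin k) ℚ :=
  (l.map fun m => hElem k (m : ℤ)).prod

/-- `~h_λ = S_{R_1} ⋯ S_{R_n} · h_μ`, where `λ = μ ∪ R_1 ∪ ⋯ ∪ R_n` is the
unique decomposition of the `k`-bounded partition `λ` into a `k`-irreducible
partition `μ` and `k`-rectangles: for each part size `j`, the multiplicity
`λ.count j` is split by Euclidean division by `k+1-j` into `λ.count j / (k+1-j)`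
copies of the `k`-rectangle `(j^{k+1-j})`, each contributing a factor
`S_{(j^{k+1-j})}`, and a remainder `λ.count j % (k+1-j) ≤ k-j` of parts equal to
`j` left in `μ`, contributing a factor `h_j^{λ.count j % (k+1-j)}`. -/
noncomputable def hTilde (k : ℕ) (l : List ℕ) : MvPolynomial (Fin k) ℚ :=
  ∏ j ∈ Finset.Icc 1 k,
    rectSchur k j ^ (l.count j / (k + 1 - j)) *
      hElem k (j : ℤ) ^ (l.count j % (k + 1 - j))


set_option maxHeartbeats 1000000
open Finsupp

namespace HTB
variable {k : ℕ}

/-- weighted degree: `h_{i+1}` has weight `i+1`. -/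
def wt (c : Fin k →₀ ℕ) : ℕ := ∑ i : Fin k, (i.val + 1) * c i

lemma wt_zero : wt (0 : Fin k →₀ ℕ) = 0 := by simp [wt]

lemma wt_add (c d : Fin k →₀ ℕ) : wt (c + d) = wt c + wt d := by
  simp [wt, Finsupp.add_apply, Nat.mul_add, Finset.sum_add_distrib]

lemma wt_single (i : Fin k) (n : ℕ) : wt (Finsupp.single i n) = (i.val + 1) * n := by
  classical
  simp only [wt, Finsupp.single_apply]
  rw [Finset.sum_eq_single i]
  · simp
  · intro b _ hb
    rw [if_neg (Ne.symm hb), Nat.mul_zero]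
  · intro h
    exact absurd (Finset.mem_univ i) h

lemma wt_sum {β : Type*} (s : Finset β) (f : β → (Fin k →₀ ℕ)) :
    wt (∑ b ∈ s, f b) = ∑ b ∈ s, wt (f b) := by
  classical
  induction s using Finset.induction with
  | empty => simp [wt_zero]
  | @insert _ _ h ih => rw [Finset.sum_insert h, Finset.sum_insert h, wt_add, ih]

/-- reverse-lex comparison map. -/
def E (c : Fin k →₀ ℕ) : Lex (Fin k → ℕ) := toLex fun i => c i.rev

lemma E_lt {c a : Fin k →₀ ℕ} (M : Fin k) (h1 : c M < a M)
    (h2 : ∀ t, M < t → a t = c t) : E c < E a := by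
  refine ⟨M.rev, fun j hj => ?_, ?_⟩
  · have hj' : j.rev.rev < M.rev := by
      simpa [Fin.rev_rev] using hj
    exact (h2 j.rev (Fin.rev_lt_rev.mp hj')).symm
  · show c M.rev.rev < a M.rev.rev
    simpa [Fin.rev_rev] using h1

/-- dominance relation: same weight, equal or reverse-lex greater. -/
def Ge' (c a : Fin k →₀ ℕ) : Prop :=
  wt a = wt c ∧ (a = c ∨ ∃ M, c M < a M ∧ ∀ t, M < t → a t = c t)

lemma Ge'_refl (c : Fin k →₀ ℕ) : Ge' c c := ⟨rfl, Or.inl rfl⟩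

lemma Ge'_lt {c a : Fin k →₀ ℕ} (h : Ge' c a) (hne : a ≠ c) : E c < E a := by
  rcases h.2 with h | ⟨M, h1, h2⟩
  · exact absurd h hne
  · exact E_lt M h1 h2

lemma Ge'_add {c₁ c₂ x y : Fin k →₀ ℕ} (hx : Ge' c₁ x) (hy : Ge' c₂ y) :
    Ge' (c₁ + c₂) (x + y) := by
  refine ⟨by rw [wt_add, wt_add, hx.1, hy.1], ?_⟩
  rcases hx.2 with rfl | ⟨M₁, hM₁, hA₁⟩
  · rcases hy.2 with rfl | ⟨M₂, hM₂, hA₂⟩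
    · exact Or.inl rfl
    · refine Or.inr ⟨M₂, ?_, fun t ht => ?_⟩
      · simpa [Finsupp.add_apply] using hM₂
      · simp [Finsupp.add_apply, hA₂ t ht]
  · rcases hy.2 with rfl | ⟨M₂, hM₂, hA₂⟩
    · refine Or.inr ⟨M₁, ?_, fun t ht => ?_⟩
      · simpa [Finsupp.add_apply] using hM₁
      · simp [Finsupp.add_apply, hA₁ t ht]
    · rcases le_total M₁ M₂ with h | h
      · refine Or.inr ⟨M₂, ?_, fun t ht => ?_⟩
        · have hx2 : c₁ M₂ ≤ x M₂ := by
            rcases eq_or_lt_of_le h with rfl | hlt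
            · exact le_of_lt hM₁
            · exact le_of_eq (hA₁ M₂ hlt).symm
          simp only [Finsupp.add_apply]
          omega
        · have h1 := hA₁ t (lt_of_le_of_lt h ht)
          have h2 := hA₂ t ht
          simp [Finsupp.add_apply, h1, h2]
      · refine Or.inr ⟨M₁, ?_, fun t ht => ?_⟩
        · have hy2 : c₂ M₁ ≤ y M₁ := by
            rcases eq_or_lt_of_le h with rfl | hlt
            · exact le_of_lt hM₂
            · exact le_of_eq (hA₂ M₁ hlt).symm
          simp only [Finsupp.add_apply]
          omega
        · have h1 := hA₁ t ht
          have h2 := hA₂ t (lt_of_le_of_lt h ht)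
          simp [Finsupp.add_apply, h1, h2]

lemma Ge'_cancel {c₁ c₂ x y : Fin k →₀ ℕ} (hx : Ge' c₁ x) (hy : Ge' c₂ y)
    (hxy : x + y = c₁ + c₂) : x = c₁ ∧ y = c₂ := by
  rcases hx.2 with rfl | ⟨M₁, hM₁, hA₁⟩
  · exact ⟨rfl, by rwa [add_right_inj] at hxy⟩
  · exfalso
    rcases hy.2 with rfl | ⟨M₂, hM₂, hA₂⟩
    · -- y = c₂, x strictly bigger at M₁, equal above: contradiction with sum eq
      have := DFunLike.congr_fun hxy M₁
      simp only [Finsupp.add_apply] at this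
      omega
    · rcases le_total M₁ M₂ with h | h
      · have hx2 : c₁ M₂ ≤ x M₂ := by
          rcases eq_or_lt_of_le h with rfl | hlt
          · exact le_of_lt hM₁
          · exact le_of_eq (hA₁ M₂ hlt).symm
        have := DFunLike.congr_fun hxy M₂
        simp only [Finsupp.add_apply] at this
        omega
      · have hy2 : c₂ M₁ ≤ y M₁ := by
          rcases eq_or_lt_of_le h with rfl | hlt
          · exact le_of_lt hM₂
          · exact le_of_eq (hA₂ M₁ hlt).symm
        have := DFunLike.congr_fun hxy M₁
        simp only [Finsupp.add_apply] at this
        omega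


/-- `p` has leading monomial `X^c` with coefficient 1, and all other
monomials dominate `c` in the reverse-lex order with equal weight. -/
def Lead (c : Fin k →₀ ℕ) (p : MvPolynomial (Fin k) ℚ) : Prop :=
  coeff c p = 1 ∧ ∀ a, coeff a p ≠ 0 → Ge' c a

lemma Lead.one : Lead (0 : Fin k →₀ ℕ) 1 := by
  constructor
  · simp
  · intro a ha
    have : a = 0 := by
      by_contra h
      simp [coeff_one, if_neg (Ne.symm h)] at ha
    subst this; exact Ge'_refl 0

lemma Lead.mul {c₁ c₂ : Fin k →₀ ℕ} {p q : MvPolynomial (Fin k) ℚ}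
    (hp : Lead c₁ p) (hq : Lead c₂ q) : Lead (c₁ + c₂) (p * q) := by
  classical
  constructor
  · rw [coeff_mul]
    have hmem : ((c₁, c₂) : (Fin k →₀ ℕ) × _) ∈ Finset.HasAntidiagonal.antidiagonal (c₁ + c₂) := by
      rw [Finset.HasAntidiagonal.mem_antidiagonal]
    have hz : ∀ b : (Fin k →₀ ℕ) × (Fin k →₀ ℕ), b ∈ Finset.HasAntidiagonal.antidiagonal (c₁ + c₂) →
        b ≠ (c₁, c₂) → coeff b.1 p * coeff b.2 q = 0 := by
      intro b hb hbne
      by_contra h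
      rcases mul_ne_zero_iff.1 h with ⟨hx, hy⟩
      rcases Ge'_cancel (hp.2 b.1 hx) (hq.2 b.2 hy) (Finset.HasAntidiagonal.mem_antidiagonal.1 hb) with ⟨h1, h2⟩
      exact hbne (Prod.ext h1 h2)
    have := Finset.sum_eq_single_of_mem (f := fun x : (Fin k →₀ ℕ) × (Fin k →₀ ℕ) =>
        coeff x.1 p * coeff x.2 q) ((c₁, c₂)) hmem hz
    rw [this]
    show coeff c₁ p * coeff c₂ q = 1
    rw [hp.1, hq.1, one_mul]
  · intro a ha
    rw [coeff_mul] at ha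
    rcases Finset.exists_ne_zero_of_sum_ne_zero ha with ⟨⟨x, y⟩, hmem, hne⟩
    rw [Finset.HasAntidiagonal.mem_antidiagonal] at hmem
    rcases mul_ne_zero_iff.1 hne with ⟨hx, hy⟩
    rw [← hmem]
    exact Ge'_add (hp.2 x hx) (hq.2 y hy)

lemma Lead.pow {c : Fin k →₀ ℕ} {p : MvPolynomial (Fin k) ℚ} (hp : Lead c p) (n : ℕ) :
    Lead (n • c) (p ^ n) := by
  induction n with
  | zero => simpa using Lead.one
  | succ n ih =>
    have := ih.mul hp
    rw [pow_succ, succ_nsmul]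
    exact this

lemma Lead.prod {β : Type*} (s : Finset β) (cf : β → (Fin k →₀ ℕ))
    (f : β → MvPolynomial (Fin k) ℚ) (h : ∀ b ∈ s, Lead (cf b) (f b)) :
    Lead (∑ b ∈ s, cf b) (∏ b ∈ s, f b) := by
  classical
  induction s using Finset.induction with
  | empty => simpa using Lead.one
  | @insert b s hb ih =>
    rw [Finset.sum_insert hb, Finset.prod_insert hb]
    exact (h b (Finset.mem_insert_self b s)).mul
      (ih fun x hx => h x (Finset.mem_insert_of_mem hx))

lemma lead_X (i : Fin k) : Lead (Finsupp.single i 1) (X i) := by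
  constructor
  · simp [coeff_X]
  · intro a ha
    have : a = Finsupp.single i 1 := by
      by_contra h
      rw [coeff_X', if_neg (by simpa [eq_comm] using h)] at ha
      exact ha rfl
    subst this; exact Ge'_refl _


lemma hElem_eq_X {j : ℕ} (h1 : 1 ≤ j) (h2 : j ≤ k) :
    hElem k (j : ℤ) = X (⟨j - 1, by omega⟩ : Fin k) := by
  rw [hElem, dif_pos ⟨by exact_mod_cast h1, by exact_mod_cast h2⟩]
  exact congrArg X (Fin.ext (by simp))

lemma hElem_zero_of (m : ℤ) (h : m < 0 ∨ (k : ℤ) < m) : hElem k m = 0 := by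
  rw [hElem, dif_neg (by omega), if_neg (by omega)]

lemma hElem_one : hElem k (0 : ℤ) = 1 := by
  rw [hElem, dif_neg (by omega), if_pos rfl]

lemma prod_monomial_one {β : Type*} (s : Finset β) (e : β → (Fin k →₀ ℕ)) :
    (∏ b ∈ s, (monomial (e b) (1 : ℚ) : MvPolynomial (Fin k) ℚ))
      = monomial (∑ b ∈ s, e b) 1 := by
  classical
  induction s using Finset.induction with
  | empty => simp
  | @insert b s hb ih =>
    rw [Finset.prod_insert hb, Finset.sum_insert hb, ih, monomial_mul, mul_one]

lemma perm_exists_lt {n : ℕ} {σ : Equiv.Perm (Fin n)} (hσ : σ ≠ 1) :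
    ∃ b, σ b < b := by
  by_contra h
  push_neg at h
  have hsum : ∑ b : Fin n, ((σ b : ℕ)) = ∑ b : Fin n, (b : ℕ) :=
    Equiv.sum_comp σ (fun b => (b : ℕ))
  have heq : ∀ b ∈ Finset.univ, (b : Fin n).val = (σ b).val :=
    (Finset.sum_eq_sum_iff_of_le (fun (b : Fin n) _ => (show (b : ℕ) ≤ (σ b : ℕ) from h b))).1 hsum.symm
  apply hσ
  ext b
  exact (heq b (Finset.mem_univ b)).symm

lemma lead_rectSchur (i : Fin k) :
    Lead (Finsupp.single i (k - i.val)) (rectSchur k (i.val + 1)) := by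
  classical
  set ℓ : ℕ := i.val + 1 with hℓ
  have hik : i.val < k := i.2
  set n : ℕ := k + 1 - ℓ with hn
  have hnk : n = k - i.val := by omega
  set me : Equiv.Perm (Fin n) → Fin n → ℤ :=
    fun σ b => (ℓ : ℤ) - (((σ b : ℕ) : ℤ) + 1) + (((b : ℕ) : ℤ) + 1) with hme
  have hdet : rectSchur k ℓ = ∑ σ : Equiv.Perm (Fin n),
      ((Equiv.Perm.sign σ : ℤ) : MvPolynomial (Fin k) ℚ) *
        ∏ b : Fin n, hElem k (me σ b) := by
    rw [rectSchur, Matrix.det_apply']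
    rfl
  have hid : (∏ b : Fin n, hElem k (me 1 b)) = X i ^ n := by
    have hb : ∀ b : Fin n, hElem k (me 1 b) = X i := by
      intro b
      have h1 : me 1 b = ((ℓ : ℕ) : ℤ) := by simp [hme]
      rw [h1, hElem_eq_X (by omega) (by omega)]
      exact congrArg X (Fin.ext (by simp [hℓ]))
    rw [Finset.prod_congr rfl (fun b _ => hb b), Finset.prod_const, Finset.card_univ,
      Fintype.card_fin]
  have hsmul : ∀ (σ : Equiv.Perm (Fin n)) (a : Fin k →₀ ℕ),
      coeff a (((Equiv.Perm.sign σ : ℤ) : MvPolynomial (Fin k) ℚ) *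
        ∏ b : Fin n, hElem k (me σ b))
      = (Equiv.Perm.sign σ : ℤ) • coeff a (∏ b : Fin n, hElem k (me σ b)) := by
    intro σ a
    rw [← zsmul_eq_mul, coeff_smul]
  -- non-identity permutation terms
  have hP : ∀ σ : Equiv.Perm (Fin n), σ ≠ 1 → ∀ a : Fin k →₀ ℕ,
      coeff a (∏ b : Fin n, hElem k (me σ b)) ≠ 0 →
      wt a = ℓ * n ∧ ∃ M : Fin k, i < M ∧ 0 < a M ∧ ∀ t, M < t → a t = 0 := by
    intro σ hσ a ha
    by_cases hdeg : ∀ b : Fin n, 0 ≤ me σ b ∧ me σ b ≤ (k : ℤ)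
    · obtain ⟨b0, hb0⟩ := perm_exists_lt hσ
      have hb0' : (ℓ : ℤ) + 1 ≤ me σ b0 := by
        have hc : ((σ b0 : ℕ) : ℤ) < ((b0 : ℕ) : ℤ) := by exact_mod_cast hb0
        simp only [hme]
        omega
      have hpf : ∀ b : Fin n, 1 ≤ me σ b → (me σ b).toNat - 1 < k := by
        intro b hb
        have := (hdeg b).2
        omega
      set e : Fin n → (Fin k →₀ ℕ) := fun b =>
        if hb : 1 ≤ me σ b then Finsupp.single (⟨(me σ b).toNat - 1, hpf b hb⟩ : Fin k) 1
        else 0 with he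
      have hfac : ∀ b : Fin n, hElem k (me σ b) = monomial (e b) 1 := by
        intro b
        by_cases hb : 1 ≤ me σ b
        · rw [hElem, dif_pos ⟨hb, (hdeg b).2⟩, he]
          simp only [dif_pos hb]
          rfl
        · have h0 : me σ b = 0 := by have := (hdeg b).1; omega
          rw [h0, hElem_one, he]
          simp only [hb, dite_false]
          rw [monomial_zero']
          simp
      have hPmono : (∏ b : Fin n, hElem k (me σ b)) = monomial (∑ b : Fin n, e b) 1 := by
        rw [Finset.prod_congr rfl fun b _ => hfac b, prod_monomial_one]
      rw [hPmono, coeff_monomial] at ha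
      have haA : a = ∑ b : Fin n, e b := by
        by_contra hne
        rw [if_neg (fun hh => hne hh.symm)] at ha
        exact ha rfl
      subst haA
      constructor
      · rw [wt_sum]
        have hwte : ∀ b : Fin n, wt (e b) = (me σ b).toNat := by
          intro b
          by_cases hb : 1 ≤ me σ b
          · rw [he]
            simp only [dif_pos hb]
            rw [wt_single]
            simp only []
            have := (hdeg b).2
            omega
          · rw [he]
            simp only [dif_neg hb]
            rw [wt_zero]
            have := (hdeg b).1
            omega
        rw [Finset.sum_congr rfl fun b _ => hwte b]
        have hint : ∑ b : Fin n, (me σ b) = (n : ℤ) * (ℓ : ℤ) := by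
          have h1 : ∑ b : Fin n, (((σ b : ℕ) : ℤ) + 1) = ∑ b : Fin n, (((b : ℕ) : ℤ) + 1) :=
            Equiv.sum_comp σ (fun b => ((b : ℕ) : ℤ) + 1)
          calc ∑ b : Fin n, me σ b
              = ∑ b : Fin n, (ℓ : ℤ) - ∑ b : Fin n, (((σ b : ℕ) : ℤ) + 1)
                  + ∑ b : Fin n, (((b : ℕ) : ℤ) + 1) := by
                rw [← Finset.sum_sub_distrib, ← Finset.sum_add_distrib]
            _ = (n : ℤ) * (ℓ : ℤ) := by
                rw [h1, Finset.sum_const, Finset.card_univ, Fintype.card_fin]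
                ring
        have hcast : ((∑ b : Fin n, (me σ b).toNat : ℕ) : ℤ) = ((ℓ * n : ℕ) : ℤ) := by
          rw [Nat.cast_sum]
          rw [Finset.sum_congr rfl fun b _ => Int.toNat_of_nonneg (hdeg b).1]
          rw [hint]
          push_cast
          ring
        exact_mod_cast hcast
      · set A := ∑ b : Fin n, e b with hA
        have hb0'' : 1 ≤ me σ b0 := by omega
        set j0 : Fin k := ⟨(me σ b0).toNat - 1, hpf b0 hb0''⟩ with hj0def
        have hj0 : (i : ℕ) < j0.val := by
          simp only [hj0def]
          omega
        have heb0 : e b0 j0 = 1 := by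
          rw [he]
          simp only [dif_pos hb0'']
          exact Finsupp.single_eq_same
        have hAj0 : 0 < A j0 := by
          have hle : e b0 j0 ≤ A j0 := by
            rw [hA, Finsupp.finset_sum_apply]
            exact Finset.single_le_sum (f := fun b => e b j0) (fun b _ => Nat.zero_le _)
              (Finset.mem_univ b0)
          omega
        have hAsupp : A.support.Nonempty := ⟨j0, Finsupp.mem_support_iff.2 (by omega)⟩
        refine ⟨A.support.max' hAsupp, ?_, ?_, ?_⟩
        · have hle : j0 ≤ A.support.max' hAsupp :=
            Finset.le_max' _ _ (Finsupp.mem_support_iff.2 (by omega))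
          have : i < j0 := hj0
          exact lt_of_lt_of_le this hle
        · have := A.support.max'_mem hAsupp
          rw [Finsupp.mem_support_iff] at this
          omega
        · intro t ht
          by_contra h0
          have : t ∈ A.support := Finsupp.mem_support_iff.2 h0
          exact absurd (Finset.le_max' _ _ this) (not_le.2 ht)
    · push_neg at hdeg
      obtain ⟨b, hb⟩ := hdeg
      have hz : hElem k (me σ b) = 0 := by
        apply hElem_zero_of
        omega
      rw [Finset.prod_eq_zero (Finset.mem_univ b) hz] at ha
      simp at ha
  -- assemble
  rw [← hnk]
  constructor
  · rw [hdet, coeff_sum]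
    have h1mem : (1 : Equiv.Perm (Fin n)) ∈ (Finset.univ : Finset (Equiv.Perm (Fin n))) :=
      Finset.mem_univ 1
    have hz : ∀ σ ∈ (Finset.univ : Finset (Equiv.Perm (Fin n))), σ ≠ 1 →
        coeff (Finsupp.single i n)
          (((Equiv.Perm.sign σ : ℤ) : MvPolynomial (Fin k) ℚ) *
            ∏ b : Fin n, hElem k (me σ b)) = 0 := by
      intro σ _ hσ
      rw [hsmul]
      have hc : coeff (Finsupp.single i n) (∏ b : Fin n, hElem k (me σ b)) = 0 := by
        by_contra hc
        obtain ⟨_, M, hiM, hpos, _⟩ := hP σ hσ _ hc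
        rw [Finsupp.single_apply, if_neg (Fin.ne_of_lt hiM)] at hpos
        exact absurd hpos (lt_irrefl 0)
      rw [hc, smul_zero]
    rw [Finset.sum_eq_single_of_mem 1 h1mem hz, hsmul, hid, coeff_X_pow, if_pos rfl]
    simp
  · intro a ha
    rw [hdet, coeff_sum] at ha
    obtain ⟨σ, _, hσa⟩ := Finset.exists_ne_zero_of_sum_ne_zero ha
    rw [hsmul] at hσa
    have hσa' : coeff a (∏ b : Fin n, hElem k (me σ b)) ≠ 0 := by
      intro h0
      rw [h0, smul_zero] at hσa
      exact hσa rfl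
    by_cases hσ : σ = 1
    · subst hσ
      rw [hid] at hσa'
      have : a = Finsupp.single i n := by
        by_contra hne
        rw [coeff_X_pow, if_neg (fun hh => hne hh.symm)] at hσa'
        exact hσa' rfl
      subst this
      exact Ge'_refl _
    · obtain ⟨hwt, M, hiM, hpos, htail⟩ := hP σ hσ a hσa'
      refine ⟨?_, Or.inr ⟨M, ?_, ?_⟩⟩
      · rw [hwt, wt_single]
      · rw [Finsupp.single_apply, if_neg (Fin.ne_of_lt hiM)]
        exact hpos
      · intro t ht
        rw [htail t ht, Finsupp.single_apply, if_neg (Fin.ne_of_lt (lt_trans hiM ht))]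


/-- Build the sorted list with `d m` parts equal to `m`, for `m = j, j-1, …, 1`. -/
def buildL (d : ℕ → ℕ) : ℕ → List ℕ
  | 0 => []
  | j + 1 => List.replicate (d (j + 1)) (j + 1) ++ buildL d j

lemma mem_buildL {d : ℕ → ℕ} {j x : ℕ} (hx : x ∈ buildL d j) : 1 ≤ x ∧ x ≤ j := by
  induction j with
  | zero => simp [buildL] at hx
  | succ j ih =>
    rw [buildL, List.mem_append] at hx
    rcases hx with hx | hx
    · rw [List.eq_of_mem_replicate hx]
      omega
    · have := ih hx
      omega

lemma sorted_buildL (d : ℕ → ℕ) (j : ℕ) : (buildL d j).Pairwise (· ≥ ·) := by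
  induction j with
  | zero => simp [buildL]
  | succ j ih =>
    rw [buildL, List.pairwise_append]
    refine ⟨?_, ih, ?_⟩
    · rw [List.pairwise_replicate]
      right
      exact le_refl _
    · intro a ha b hb
      rw [List.eq_of_mem_replicate ha]
      have := mem_buildL hb
      omega

lemma count_buildL (d : ℕ → ℕ) (j m : ℕ) :
    (buildL d j).count m = if 1 ≤ m ∧ m ≤ j then d m else 0 := by
  induction j with
  | zero =>
    rw [buildL]
    simp only [List.count_nil]
    rw [if_neg (by omega)]
  | succ j ih =>
    rw [buildL, List.count_append, ih, List.count_replicate]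
    by_cases h : m = j + 1
    · subst h
      rw [if_pos (by exact beq_self_eq_true _), if_neg (by omega), if_pos (by omega)]
      omega
    · rw [if_neg (by simpa using fun hh => h hh.symm)]
      by_cases h2 : 1 ≤ m ∧ m ≤ j
      · rw [if_pos h2, if_pos (by omega)]
        omega
      · rw [if_neg h2, if_neg (by omega)]

lemma buildL_congr {d₁ d₂ : ℕ → ℕ} (j : ℕ) (h : ∀ m, 1 ≤ m → m ≤ j → d₁ m = d₂ m) :
    buildL d₁ j = buildL d₂ j := by
  induction j with
  | zero => rfl
  | succ j ih =>
    rw [buildL, buildL, h (j + 1) (by omega) (le_refl _),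
      ih fun m h1 h2 => h m h1 (by omega)]

lemma buildL_eq {l : List ℕ} (hs : l.Pairwise (· ≥ ·)) (hpos : ∀ x ∈ l, 0 < x)
    (hb : ∀ x ∈ l, x ≤ k) : buildL (fun m => l.count m) k = l := by
  haveI : IsAntisymm ℕ (· ≥ ·) := ⟨fun a b h1 h2 => le_antisymm h2 h1⟩
  refine List.Perm.eq_of_pairwise (fun a b _ _ h1 h2 => le_antisymm h2 h1)
    (sorted_buildL _ _) hs (List.perm_iff_count.2 fun m => ?_)
  rw [count_buildL]
  by_cases h : 1 ≤ m ∧ m ≤ k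
  · rw [if_pos h]
  · rw [if_neg h]
    symm
    rw [List.count_eq_zero]
    intro hm
    exact h ⟨hpos m hm, hb m hm⟩

/-- part multiplicities of a list, as a finitely supported vector. -/
noncomputable def cnts (l : List ℕ) : Fin k →₀ ℕ :=
  Finsupp.equivFunOnFinite.symm fun i : Fin k => l.count (i.val + 1)

/-- multiplicity function on ℕ determined by a vector of multiplicities. -/
def dOf (c : Fin k →₀ ℕ) : ℕ → ℕ := fun m =>
  if h : 1 ≤ m ∧ m ≤ k then c ⟨m - 1, by omega⟩ else 0

lemma cnts_apply (l : List ℕ) (i : Fin k) : cnts l i = l.count (i.val + 1) := rfl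

lemma isKBounded_buildL (c : Fin k →₀ ℕ) : IsKBoundedPartition k (buildL (dOf c) k) :=
  ⟨⟨sorted_buildL _ _, fun x hx => (mem_buildL hx).1⟩, fun x hx => (mem_buildL hx).2⟩

/-- the fundamental bijection. -/
noncomputable def gam : (Fin k →₀ ℕ) ≃ {l : List ℕ // IsKBoundedPartition k l} where
  toFun c := ⟨buildL (dOf c) k, isKBounded_buildL c⟩
  invFun l := cnts l.1
  left_inv c := by
    ext i
    rw [cnts_apply, count_buildL, if_pos (by omega), dOf, dif_pos (by omega)]
    congr 1
  right_inv l := by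
    rcases l with ⟨l, ⟨hs, hpos⟩, hb⟩
    refine Subtype.ext ?_
    show buildL (dOf (cnts l)) k = l
    rw [buildL_congr k (d₂ := fun m => l.count m) ?_]
    · exact buildL_eq hs (fun x hx => hpos x hx) hb
    · intro m h1 h2
      rw [dOf, dif_pos ⟨h1, h2⟩, cnts_apply]
      congr 1
      simp only [Fin.val_mk]
      omega


/-- the candidate basis family, indexed by multiplicity vectors. -/
noncomputable def Fam (c : Fin k →₀ ℕ) : MvPolynomial (Fin k) ℚ :=
  hTilde k (buildL (dOf c) k)

lemma lead_Fam (c : Fin k →₀ ℕ) : Lead c (Fam c) := by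
  classical
  rw [Fam, hTilde]
  set cf : ℕ → (Fin k →₀ ℕ) := fun j =>
    if h : 1 ≤ j ∧ j ≤ k then
      Finsupp.single (⟨j - 1, by omega⟩ : Fin k) (c ⟨j - 1, by omega⟩) else 0 with hcf
  have hcnt : ∀ (j : ℕ) (h1 : 1 ≤ j) (h2 : j ≤ k),
      (buildL (dOf c) k).count j = c ⟨j - 1, by omega⟩ := by
    intro j h1 h2
    rw [count_buildL, if_pos ⟨h1, h2⟩, dOf, dif_pos ⟨h1, h2⟩]
  have hL : ∀ j ∈ Finset.Icc 1 k, Lead (cf j)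
      (rectSchur k j ^ ((buildL (dOf c) k).count j / (k + 1 - j)) *
        hElem k (j : ℤ) ^ ((buildL (dOf c) k).count j % (k + 1 - j))) := by
    intro j hj
    rw [Finset.mem_Icc] at hj
    obtain ⟨h1, h2⟩ := hj
    set i : Fin k := ⟨j - 1, by omega⟩ with hi
    have hrs : Lead (Finsupp.single i (k + 1 - j)) (rectSchur k j) := by
      have h := lead_rectSchur i
      have hiv : i.val = j - 1 := rfl
      have e1 : i.val + 1 = j := by omega
      have e2 : k - i.val = k + 1 - j := by omega
      rw [e1, e2] at h
      exact h
    have hX : Lead (Finsupp.single i 1) (hElem k (j : ℤ)) := by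
      rw [hElem_eq_X h1 h2]
      exact lead_X i
    have h := (hrs.pow ((buildL (dOf c) k).count j / (k + 1 - j))).mul
      (hX.pow ((buildL (dOf c) k).count j % (k + 1 - j)))
    have hexp : ((buildL (dOf c) k).count j / (k + 1 - j)) • Finsupp.single i (k + 1 - j)
        + ((buildL (dOf c) k).count j % (k + 1 - j)) • Finsupp.single i 1
        = cf j := by
      rw [Finsupp.smul_single, Finsupp.smul_single, ← Finsupp.single_add]
      simp only [hcf]
      rw [dif_pos ⟨h1, h2⟩]
      congr 1
      rw [smul_eq_mul, smul_eq_mul, mul_one, Nat.mul_comm, Nat.div_add_mod]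
      exact (hcnt j h1 h2)
    rw [hexp] at h
    exact h
  have h := Lead.prod (Finset.Icc 1 k) cf _ hL
  have hsum : (∑ j ∈ Finset.Icc 1 k, cf j) = c := by
    ext i
    rw [Finsupp.finset_sum_apply]
    rw [Finset.sum_eq_single (i.val + 1)]
    · simp only [hcf]
      have hik : i.val < k := i.2
      rw [dif_pos ⟨by omega, by omega⟩]
      have : (⟨i.val + 1 - 1, by omega⟩ : Fin k) = i := Fin.ext (by simp)
      rw [this]
      exact Finsupp.single_eq_same
    · intro j hjmem hjne
      rw [Finset.mem_Icc] at hjmem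
      simp only [hcf]
      rw [dif_pos hjmem, Finsupp.single_apply, if_neg]
      intro hh
      apply hjne
      have : j - 1 = i.val := by
        have := congrArg Fin.val hh
        simpa using this
      omega
    · intro hnf
      exfalso
      apply hnf
      rw [Finset.mem_Icc]
      have := i.2
      omega
  rw [hsum] at h
  exact h

/-- box bound for a given weight. -/
noncomputable def bnd (c : Fin k →₀ ℕ) : Fin k →₀ ℕ :=
  Finsupp.equivFunOnFinite.symm fun _ => wt c

lemma le_bnd {c a : Fin k →₀ ℕ} (h : wt a = wt c) : a ≤ bnd c := by
  rw [Finsupp.le_def]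
  intro i
  have h1 : a i ≤ (i.val + 1) * a i := Nat.le_mul_of_pos_left _ (by omega)
  have h2 : (i.val + 1) * a i ≤ wt a :=
    Finset.single_le_sum (f := fun t : Fin k => (t.val + 1) * a t)
      (fun _ _ => Nat.zero_le _) (Finset.mem_univ i)
  have h3 : bnd c i = wt c := rfl
  omega

/-- the finite set of exceedances, used as a termination measure. -/
noncomputable def measSet (c : Fin k →₀ ℕ) : Finset (Fin k →₀ ℕ) :=
  @Finset.filter _ (fun a => wt a = wt c ∧ E c < E a) (Classical.decPred _)
    (Finset.Iic (bnd c))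

noncomputable def meas (c : Fin k →₀ ℕ) : ℕ := (measSet c).card

lemma mem_measSet {c x : Fin k →₀ ℕ} :
    x ∈ measSet c ↔ x ≤ bnd c ∧ wt x = wt c ∧ E c < E x := by
  classical
  simp [measSet, Finset.mem_Iic]

lemma meas_lt {c a : Fin k →₀ ℕ} (h : Ge' c a) (hne : a ≠ c) : meas a < meas c := by
  have hwt : wt a = wt c := h.1
  have hlt : E c < E a := Ge'_lt h hne
  have hsub : measSet a ⊆ measSet c := by
    intro x hx
    rw [mem_measSet] at hx ⊢
    obtain ⟨hle, hwx, hxlt⟩ := hx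
    refine ⟨le_bnd (by rw [hwx, hwt]), by rw [hwx, hwt], lt_trans hlt hxlt⟩
  have hmem : a ∈ measSet c := mem_measSet.2 ⟨le_bnd hwt, hwt, hlt⟩
  have hnmem : a ∉ measSet a := by
    rw [mem_measSet]
    rintro ⟨-, -, hcon⟩
    exact absurd hcon (lt_irrefl _)
  exact Finset.card_lt_card ⟨hsub, fun hsup => hnmem (hsup hmem)⟩

end HTB

open HTB in
/-- The family `{ ~h_λ : λ a k-bounded partition }` is a basis of
`R = ℚ[h_1, …, h_k]` as a `ℚ`-vector space. -/
theorem hTilde_basis (k : ℕ) (hk : 0 < k) :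
    ∃ b : Module.Basis {l : List ℕ // IsKBoundedPartition k l} ℚ (MvPolynomial (Fin k) ℚ),
      ∀ l, b l = hTilde k l.1 := by
  classical
  set bm := MvPolynomial.basisMonomials (Fin k) ℚ with hbm
  have hbmd : ∀ d : Fin k →₀ ℕ, bm d = monomial d 1 := by
    intro d
    rw [hbm]
    rw [show ⇑(MvPolynomial.basisMonomials (Fin k) ℚ) = fun s => (monomial s) (1 : ℚ) from
      coe_basisMonomials (Fin k) ℚ]
  set ψ : MvPolynomial (Fin k) ℚ →ₗ[ℚ] MvPolynomial (Fin k) ℚ := bm.constr ℚ Fam with hψdef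
  have hψm : ∀ d : Fin k →₀ ℕ, ψ (monomial d 1) = Fam d := by
    intro d
    rw [← hbmd d, hψdef]
    exact Module.Basis.constr_basis bm ℚ Fam d
  have hmono_smul : ∀ (v : Fin k →₀ ℕ) (r : ℚ), monomial v r = r • monomial v (1 : ℚ) := by
    intro v r
    rw [smul_monomial, smul_eq_mul, mul_one]
  have hrep : ∀ (p : MvPolynomial (Fin k) ℚ) (a : Fin k →₀ ℕ),
      coeff a (ψ p) = ∑ v ∈ p.support, coeff v p * coeff a (Fam v) := by
    intro p a
    have h1 : ψ p = ∑ v ∈ p.support, coeff v p • Fam v := by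
      conv_lhs => rw [as_sum p]
      rw [map_sum]
      refine Finset.sum_congr rfl fun v _ => ?_
      rw [hmono_smul v (coeff v p), map_smul, hψm]
    rw [h1, coeff_sum]
    refine Finset.sum_congr rfl fun v _ => ?_
    rw [coeff_smul, smul_eq_mul]
  have hinj : Function.Injective ψ := by
    rw [injective_iff_map_eq_zero]
    intro p hp
    by_contra hne
    have hsne : (p.support.image (E (k := k))).Nonempty :=
      (support_nonempty.2 hne).image _
    obtain ⟨y, hymem, hymin⟩ := Finset.exists_minimal hsne
    obtain ⟨c, hcmem, rfl⟩ := Finset.mem_image.1 hymem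
    have hcoeff : coeff c (ψ p) = coeff c p := by
      rw [hrep, Finset.sum_eq_single_of_mem c hcmem]
      · rw [(lead_Fam c).1, mul_one]
      · intro v hv hvne
        have h0 : coeff c (Fam v) = 0 := by
          by_contra h0
          have hg := (lead_Fam v).2 c h0
          have hlt := Ge'_lt hg (fun hh => hvne hh.symm)
          exact absurd (hymin (Finset.mem_image_of_mem _ hv) hlt.le) hlt.not_ge
        rw [h0, mul_zero]
    rw [hp] at hcoeff
    simp only [coeff_zero] at hcoeff
    exact (MvPolynomial.mem_support_iff.1 hcmem) hcoeff.symm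
  have hkey : ∀ c : Fin k →₀ ℕ, (monomial c (1 : ℚ)) ∈ LinearMap.range ψ := by
    suffices H : ∀ N (c : Fin k →₀ ℕ), meas c < N →
        (monomial c (1 : ℚ)) ∈ LinearMap.range ψ by
      exact fun c => H (meas c + 1) c (Nat.lt_succ_self _)
    intro N
    induction N with
    | zero => exact fun c hc => absurd hc (by omega)
    | succ N ih =>
      intro c hc
      have hFc : Fam c ∈ LinearMap.range ψ := ⟨monomial c 1, hψm c⟩
      have hcs : c ∈ (Fam c).support :=
        MvPolynomial.mem_support_iff.2 (by rw [(lead_Fam c).1]; exact one_ne_zero)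
      have hsplit : Fam c = monomial c 1 +
          ∑ a ∈ (Fam c).support.erase c, monomial a (coeff a (Fam c)) := by
        conv_lhs => rw [as_sum (Fam c)]
        rw [← Finset.add_sum_erase _ _ hcs, (lead_Fam c).1]
      have hrest : (∑ a ∈ (Fam c).support.erase c, monomial a (coeff a (Fam c)))
          ∈ LinearMap.range ψ := by
        apply Submodule.sum_mem
        intro a hamem
        have ha := Finset.mem_of_mem_erase hamem
        have hane : a ≠ c := Finset.ne_of_mem_erase hamem
        have hm : meas a < meas c :=
          meas_lt ((lead_Fam c).2 a (MvPolynomial.mem_support_iff.1 ha)) hane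
        have h1 : monomial a (1 : ℚ) ∈ LinearMap.range ψ := ih a (by omega)
        have h2 := Submodule.smul_mem _ (coeff a (Fam c)) h1
        rwa [← hmono_smul] at h2
      have heq : monomial c (1 : ℚ) = Fam c -
          ∑ a ∈ (Fam c).support.erase c, monomial a (coeff a (Fam c)) :=
        eq_sub_of_add_eq hsplit.symm
      rw [heq]
      exact Submodule.sub_mem _ hFc hrest
  have hsurj : Function.Surjective ψ := by
    have hrange : LinearMap.range ψ = ⊤ := by
      rw [eq_top_iff, ← bm.span_eq, Submodule.span_le]
      rintro x ⟨d, rfl⟩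
      rw [hbmd d]
      exact hkey d
    intro p
    have hp : p ∈ LinearMap.range ψ := hrange ▸ Submodule.mem_top
    exact hp
  set e := LinearEquiv.ofBijective ψ ⟨hinj, hsurj⟩ with he
  refine ⟨(bm.map e).reindex gam, fun l => ?_⟩
  rw [Module.Basis.reindex_apply, Module.Basis.map_apply, hbmd]
  have h2 : e ((monomial (gam.symm l)) (1 : ℚ)) = ψ ((monomial (gam.symm l)) (1 : ℚ)) := rfl
  rw [h2, hψm]
  have h3 : buildL (dOf (gam.symm l)) k = l.1 :=
    congrArg Subtype.val (gam.apply_symm_apply l)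
  show hTilde k (buildL (dOf (gam.symm l)) k) = hTilde k l.1
  rw [h3]
end

section
/- Let k be a positive integer, R = ℚ[h_1,…,h_k], and I_k the ideal of R generated by the k-rectangular Schur polynomials S_{(ℓ^{k+1−ℓ})} for ℓ = 1,…,k. Then the images in R/I_k of the monomials h_1^{ε_1} h_2^{ε_2} ⋯ h_k^{ε_k} with 0 ≤ ε_i ≤ k−i for each i (so in particular ε_k = 0) form a basis of R/I_k as a ℚ-vector space. -/
set_option maxHeartbeats 2000000


open MvPolynomial

set_option maxHeartbeats 2000000

open Finset Equiv

noncomputable section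
namespace RectAux
def Red (k : ℕ) (ε : Fin k →₀ ℕ) : Prop := ∀ i : Fin k, ε i + ↑i + 1 ≤ k
instance (k : ℕ) (ε : Fin k →₀ ℕ) : Decidable (Red k ε) := Fintype.decidableForallFintype
def mea (k : ℕ) (ε : Fin k →₀ ℕ) : ℕ := ∑ i : Fin k, ε i * ((↑i + 1) * (k - 1 - ↑i))
lemma mea_add (k : ℕ) (a b : Fin k →₀ ℕ) : mea k (a + b) = mea k a + mea k b := by
  simp [mea, Finsupp.add_apply, add_mul, Finset.sum_add_distrib]
lemma mea_zero (k : ℕ) : mea k 0 = 0 := by simp [mea]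
lemma mea_single (k : ℕ) (i : Fin k) (m : ℕ) :
    mea k (Finsupp.single i m) = m * ((↑i + 1) * (k - 1 - ↑i)) := by
  simp [mea, Finsupp.single_apply]
def rect (k : ℕ) (i₀ : Fin k) : Fin k →₀ ℕ := Finsupp.single i₀ (k - ↑i₀)
lemma mea_rect (k : ℕ) (i₀ : Fin k) :
    mea k (rect k i₀) = (k - ↑i₀) * ((↑i₀ + 1) * (k - 1 - ↑i₀)) := mea_single k i₀ _
variable {k : ℕ}
def sN (i₀ : Fin k) (σ : Perm (Fin (k - ↑i₀))) (j : Fin (k - ↑i₀)) : ℕ :=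
  ↑i₀ + 1 + ↑j - ↑(σ j)
def Vd (i₀ : Fin k) (σ : Perm (Fin (k - ↑i₀))) : Prop :=
  ∀ j, (↑(σ j) : ℕ) ≤ ↑i₀ + 1 + ↑j
instance (i₀ : Fin k) (σ : Perm (Fin (k - ↑i₀))) : Decidable (Vd i₀ σ) := Fintype.decidableForallFintype
def cc (i₀ : Fin k) (σ : Perm (Fin (k - ↑i₀))) : ℚ :=
  if Vd i₀ σ then ((Equiv.Perm.sign σ : ℤ) : ℚ) else 0
lemma sN_le (i₀ : Fin k) (σ : Perm (Fin (k - ↑i₀))) (j : Fin (k - ↑i₀)) :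
    sN i₀ σ j ≤ k := by
  have h1 := j.isLt
  have h2 : sN i₀ σ j ≤ ↑i₀ + 1 + ↑j := Nat.sub_le _ _
  omega
def fvec (i₀ : Fin k) (σ : Perm (Fin (k - ↑i₀))) (j : Fin (k - ↑i₀)) : Fin k →₀ ℕ :=
  if h : 1 ≤ sN i₀ σ j then
    Finsupp.single ⟨sN i₀ σ j - 1, by have := sN_le i₀ σ j; have := j.isLt; omega⟩ 1
  else 0
def vec (i₀ : Fin k) (σ : Perm (Fin (k - ↑i₀))) : Fin k →₀ ℕ := ∑ j, fvec i₀ σ j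

lemma vd_one (i₀ : Fin k) : Vd i₀ 1 := fun j => by simp

lemma cc_one (i₀ : Fin k) : cc i₀ 1 = 1 := by simp [cc, vd_one]

lemma sN_one (i₀ : Fin k) (j : Fin (k - ↑i₀)) : sN i₀ 1 j = ↑i₀ + 1 := by
  simp [sN]

lemma vec_one (i₀ : Fin k) : vec i₀ 1 = rect k i₀ := by
  have h : ∀ j : Fin (k - ↑i₀), fvec i₀ 1 j = Finsupp.single i₀ 1 := by
    intro j
    rw [fvec]
    rw [dif_pos (by rw [sN_one]; omega)]
    congr 1
    ext
    simp [sN_one]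
  rw [vec]
  simp only [h]
  rw [Finset.sum_const, Finset.card_univ, Fintype.card_fin, rect]
  ext i
  simp [Finsupp.single_apply]

-- chunk 2
lemma mea_sum {α : Type*} (s : Finset α) (f : α → (Fin k →₀ ℕ)) :
    mea k (∑ a ∈ s, f a) = ∑ a ∈ s, mea k (f a) := by
  classical
  induction s using Finset.cons_induction with
  | empty => simp [mea_zero]
  | cons a s ha ih => rw [Finset.cons_eq_insert, Finset.sum_insert ha, Finset.sum_insert ha, mea_add, ih]

lemma mea_fvec (i₀ : Fin k) (σ : Perm (Fin (k - ↑i₀))) (j : Fin (k - ↑i₀)) :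
    mea k (fvec i₀ σ j) = sN i₀ σ j * (k - sN i₀ σ j) := by
  rw [fvec]
  split
  · rename_i h
    rw [mea_single]
    have hle := sN_le i₀ σ j
    have h1 : sN i₀ σ j - 1 + 1 = sN i₀ σ j := by omega
    have h2 : k - 1 - (sN i₀ σ j - 1) = k - sN i₀ σ j := by omega
    simp only [h1, h2, one_mul]
  · rename_i h
    have : sN i₀ σ j = 0 := by omega
    simp [mea_zero, this]

lemma mea_vec_lt (i₀ : Fin k) (σ : Perm (Fin (k - ↑i₀))) (hv : Vd i₀ σ) (hσ : σ ≠ 1) :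
    mea k (vec i₀ σ) < mea k (rect k i₀) := by
  have hik := i₀.isLt
  -- integer subscripts
  have key : ∀ j : Fin (k - ↑i₀), ((sN i₀ σ j * (k - sN i₀ σ j) : ℕ) : ℤ)
      = ((↑i₀+1 : ℤ) * ((k:ℤ) - (↑i₀+1))
        + ((j:ℤ) - ↑(σ j)) * ((k:ℤ) - 2*(↑i₀+1)) - ((j:ℤ) - ↑(σ j))^2) := by
    intro j
    have h1 : (↑(σ j) : ℕ) ≤ ↑i₀ + 1 + ↑j := hv j
    have h2 := sN_le i₀ σ j
    have h3 : ((sN i₀ σ j : ℕ) : ℤ) = (↑i₀+1 : ℤ) + ↑j - ↑(σ j) := by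
      simp only [sN]; omega
    have h4 : ((sN i₀ σ j * (k - sN i₀ σ j) : ℕ) : ℤ)
        = ((sN i₀ σ j : ℕ) : ℤ) * ((k : ℤ) - ((sN i₀ σ j : ℕ) : ℤ)) := by
      push_cast [Nat.cast_sub h2]; ring
    rw [h4, h3]; ring
  have hd0 : ∑ j : Fin (k - ↑i₀), ((j:ℤ) - ↑(σ j)) = 0 := by
    have hc : ∑ j : Fin (k - ↑i₀), (↑(σ j) : ℤ) = ∑ j : Fin (k - ↑i₀), (↑j : ℤ) :=
      Equiv.sum_comp σ (fun j : Fin (k - ↑i₀) => (↑j : ℤ))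
    rw [Finset.sum_sub_distrib, hc, sub_self]
  obtain ⟨j₀, hj₀⟩ : ∃ j, σ j ≠ j := by
    by_contra h; push_neg at h; exact hσ (Equiv.ext h)
  have hpos : 0 < ∑ j : Fin (k - ↑i₀), ((j:ℤ) - ↑(σ j))^2 := by
    apply Finset.sum_pos' (fun j _ => sq_nonneg _)
    refine ⟨j₀, Finset.mem_univ _, ?_⟩
    have : ((j₀:ℤ) - ↑(σ j₀)) ≠ 0 := by
      intro h
      apply hj₀
      have : ((σ j₀ : ℕ) : ℤ) = ((j₀ : ℕ) : ℤ) := by omega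
      exact Fin.ext (by exact_mod_cast this)
    positivity
  -- cast both sides
  have lhs : ((mea k (vec i₀ σ) : ℕ) : ℤ)
      = ∑ j : Fin (k - ↑i₀), ((sN i₀ σ j * (k - sN i₀ σ j) : ℕ) : ℤ) := by
    rw [vec, mea_sum]
    push_cast
    refine Finset.sum_congr rfl fun j _ => ?_
    rw [mea_fvec]
    push_cast [Nat.cast_sub (sN_le i₀ σ j)]
    ring
  have rhs : ((mea k (rect k i₀) : ℕ) : ℤ)
      = ∑ _j : Fin (k - ↑i₀), ((↑i₀+1:ℤ) * ((k:ℤ) - (↑i₀+1))) := by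
    rw [mea_rect, Finset.sum_const, Finset.card_univ, Fintype.card_fin, nsmul_eq_mul]
    have e1 : ((k - ↑i₀ : ℕ):ℤ) = (k:ℤ) - ↑i₀ := by omega
    have e2 : ((k - 1 - ↑i₀ : ℕ):ℤ) = (k:ℤ) - ((↑i₀:ℤ)+1) := by omega
    rw [Nat.cast_mul, Nat.cast_mul, e1, e2]
    push_cast
    ring
  have final : ((mea k (vec i₀ σ):ℕ):ℤ) < ((mea k (rect k i₀):ℕ):ℤ) := by
    rw [lhs, rhs, Finset.sum_congr rfl (fun j _ => key j)]
    rw [Finset.sum_sub_distrib, Finset.sum_add_distrib]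
    have hB : ∑ x : Fin (k - ↑i₀), ((x:ℤ) - ↑(σ x)) * ((k:ℤ) - 2*((↑i₀:ℤ)+1)) = 0 := by
      rw [← Finset.sum_mul, hd0, zero_mul]
    linarith
  exact_mod_cast final

def badSet (k : ℕ) (ε : Fin k →₀ ℕ) : Finset (Fin k) :=
  Finset.univ.filter (fun i => k - ↑i ≤ ε i)

lemma badSet_nonempty {ε : Fin k →₀ ℕ} (h : ¬ Red k ε) : (badSet k ε).Nonempty := by
  rw [Red] at h; push_neg at h
  obtain ⟨i, hi⟩ := h
  refine ⟨i, ?_⟩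
  simp only [badSet, Finset.mem_filter, Finset.mem_univ, true_and]
  have := i.isLt; omega

def badIdx (ε : Fin k →₀ ℕ) (h : ¬ Red k ε) : Fin k :=
  (badSet k ε).min' (badSet_nonempty h)

lemma badIdx_le (ε : Fin k →₀ ℕ) (h : ¬ Red k ε) :
    k - ↑(badIdx ε h) ≤ ε (badIdx ε h) := by
  have hm := (badSet k ε).min'_mem (badSet_nonempty h)
  simp only [badSet, Finset.mem_filter, Finset.mem_univ, true_and] at hm
  exact hm

lemma sub_rect_add {ε : Fin k →₀ ℕ} {i₀ : Fin k} (h : k - ↑i₀ ≤ ε i₀) :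
    (ε - rect k i₀) + rect k i₀ = ε := by
  ext i
  simp only [Finsupp.add_apply, Finsupp.tsub_apply, rect, Finsupp.single_apply]
  by_cases hi : i₀ = i
  · subst hi
    simp only [if_pos rfl, if_true, eq_self_iff_true]
    omega
  · simp [hi]

def piAux (k : ℕ) : ℕ → (Fin k →₀ ℕ) → MvPolynomial (Fin k) ℚ
  | 0, ε => if Red k ε then monomial ε 1 else 0
  | (fuel+1), ε =>
    if h : Red k ε then monomial ε 1
    else
      - ∑ σ ∈ Finset.univ.erase (1 : Perm (Fin (k - ↑(badIdx ε h)))),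
          cc (badIdx ε h) σ • piAux k fuel ((ε - rect k (badIdx ε h)) + vec (badIdx ε h) σ)

lemma piAux_red {fuel : ℕ} {ε : Fin k →₀ ℕ} (h : Red k ε) :
    piAux k fuel ε = monomial ε 1 := by
  cases fuel <;> simp [piAux, h]

lemma piAux_succ {fuel : ℕ} {ε : Fin k →₀ ℕ} (h : ¬ Red k ε) :
    piAux k (fuel+1) ε
      = - ∑ σ ∈ Finset.univ.erase (1 : Perm (Fin (k - ↑(badIdx ε h)))),
          cc (badIdx ε h) σ • piAux k fuel ((ε - rect k (badIdx ε h)) + vec (badIdx ε h) σ) := by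
  simp [piAux, h]

lemma mea_step_lt {ε : Fin k →₀ ℕ} (h : ¬Red k ε) {σ : Perm (Fin (k - ↑(badIdx ε h)))}
    (hv : Vd (badIdx ε h) σ) (hσ : σ ≠ 1) :
    mea k ((ε - rect k (badIdx ε h)) + vec (badIdx ε h) σ) < mea k ε := by
  have hb : k - ↑(badIdx ε h) ≤ ε (badIdx ε h) := badIdx_le ε h
  conv_rhs => rw [← sub_rect_add hb]
  rw [mea_add, mea_add]
  exact Nat.add_lt_add_left (mea_vec_lt _ _ hv hσ) _

lemma perm_eq_one_of_dim_one {ε : Fin k →₀ ℕ} (h : ¬Red k ε)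
    (hc : k - ↑(badIdx ε h) = 1) (σ : Perm (Fin (k - ↑(badIdx ε h)))) : σ = 1 := by
  ext j
  have h1 := j.isLt
  have h2 := (σ j).isLt
  simp only [hc] at h1 h2
  simp only [Perm.one_apply]
  omega

lemma dim_one_of_mea_zero {ε : Fin k →₀ ℕ} (h : ¬Red k ε) (hm : mea k ε = 0) :
    k - ↑(badIdx ε h) = 1 := by
  have hb := badIdx_le ε h
  have hik := (badIdx ε h).isLt
  have hterm : ε (badIdx ε h) * ((↑(badIdx ε h) + 1) * (k - 1 - ↑(badIdx ε h))) = 0 := by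
    rw [mea] at hm
    exact Finset.sum_eq_zero_iff.mp hm _ (Finset.mem_univ _)
  have hε : 0 < ε (badIdx ε h) := by omega
  have : (↑(badIdx ε h) + 1) * (k - 1 - ↑(badIdx ε h)) = 0 := by
    rcases Nat.mul_eq_zero.mp hterm with h' | h'
    · omega
    · exact h'
  rcases Nat.mul_eq_zero.mp this with h' | h' <;> omega

lemma piAux_mea_zero (fuel : ℕ) {ε : Fin k →₀ ℕ} (h : ¬Red k ε) (hm : mea k ε = 0) :
    piAux k fuel ε = 0 := by
  cases fuel with
  | zero => simp [piAux, h]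
  | succ fuel =>
    rw [piAux_succ h]
    have hempty : Finset.univ.erase (1 : Perm (Fin (k - ↑(badIdx ε h)))) = ∅ := by
      apply Finset.eq_empty_of_forall_notMem
      intro σ hσ
      exact (Finset.mem_erase.mp hσ).1 (perm_eq_one_of_dim_one h (dim_one_of_mea_zero h hm) σ)
    rw [hempty, Finset.sum_empty, neg_zero]

lemma piAux_congr : ∀ (f₁ f₂ : ℕ) (ε : Fin k →₀ ℕ),
    mea k ε ≤ f₁ → mea k ε ≤ f₂ → piAux k f₁ ε = piAux k f₂ ε := by
  intro f₁
  induction f₁ with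
  | zero =>
    intro f₂ ε h₁ h₂
    by_cases h : Red k ε
    · rw [piAux_red h, piAux_red h]
    · rw [piAux_mea_zero 0 h (Nat.le_zero.mp h₁), piAux_mea_zero f₂ h (Nat.le_zero.mp h₁)]
  | succ f₁ ih =>
    intro f₂ ε h₁ h₂
    by_cases h : Red k ε
    · rw [piAux_red h, piAux_red h]
    · cases f₂ with
      | zero =>
        rw [piAux_mea_zero _ h (Nat.le_zero.mp h₂), piAux_mea_zero _ h (Nat.le_zero.mp h₂)]
      | succ f₂ =>
        rw [piAux_succ h, piAux_succ h]
        congr 1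
        refine Finset.sum_congr rfl fun σ hσ => ?_
        have hσ1 : σ ≠ 1 := (Finset.mem_erase.mp hσ).1
        by_cases hv : Vd (badIdx ε h) σ
        · have hlt := mea_step_lt h hv hσ1
          rw [ih f₂ _ (by omega) (by omega)]
        · simp [cc, hv]

def piMon {k : ℕ} (ε : Fin k →₀ ℕ) : MvPolynomial (Fin k) ℚ := piAux k (mea k ε + 1) ε

lemma piMon_red {ε : Fin k →₀ ℕ} (h : Red k ε) : piMon ε = monomial ε 1 := piAux_red h

lemma piMon_unred {ε : Fin k →₀ ℕ} (h : ¬ Red k ε) :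
    piMon ε = - ∑ σ ∈ Finset.univ.erase (1 : Perm (Fin (k - ↑(badIdx ε h)))),
        cc (badIdx ε h) σ • piMon ((ε - rect k (badIdx ε h)) + vec (badIdx ε h) σ) := by
  rw [piMon, piAux_succ h]
  congr 1
  refine Finset.sum_congr rfl fun σ hσ => ?_
  have hσ1 : σ ≠ 1 := (Finset.mem_erase.mp hσ).1
  by_cases hv : Vd (badIdx ε h) σ
  · have hlt := mea_step_lt h hv hσ1
    set A := (ε - rect k (badIdx ε h)) + vec (badIdx ε h) σ with hA
    have heq := piAux_congr (mea k ε) (mea k A + 1) A (by omega) (by omega)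
    rw [heq]
    rfl
  · simp [cc, hv]


lemma monomial_prod {α : Type*} (s : Finset α) (f : α → (Fin k →₀ ℕ)) :
    ∏ a ∈ s, (monomial (f a) (1:ℚ) : MvPolynomial (Fin k) ℚ) = monomial (∑ a ∈ s, f a) 1 := by
  classical
  induction s using Finset.cons_induction with
  | empty => simp
  | cons a s ha ih =>
    rw [Finset.cons_eq_insert, Finset.prod_insert ha, Finset.sum_insert ha, ih,
      monomial_mul, one_mul]

lemma hElem_neg {m : ℤ} (hm : m < 0) : hElem k m = 0 := by
  rw [hElem, dif_neg (by omega), if_neg (by omega)]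

lemma hElem_term (i₀ : Fin k) (σ : Perm (Fin (k - ↑i₀))) (hv : Vd i₀ σ) (j : Fin (k - ↑i₀)) :
    hElem k (((i₀:ℕ):ℤ) + 1 + (j:ℕ) - ((σ j : Fin (k - ↑i₀)):ℕ)) = monomial (fvec i₀ σ j) 1 := by
  have hvj := hv j
  have hle := sN_le i₀ σ j
  by_cases h : 1 ≤ sN i₀ σ j
  · have hm : (((i₀:ℕ):ℤ) + 1 + (j:ℕ) - ((σ j : Fin (k - ↑i₀)):ℕ)) = ((sN i₀ σ j : ℕ) : ℤ) := by
      simp only [sN]; omega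
    rw [hm, hElem, dif_pos (by constructor <;> [exact_mod_cast h; exact_mod_cast hle])]
    rw [fvec, dif_pos h]
    simp only [Int.toNat_natCast]
    rfl
  · have h0 : sN i₀ σ j = 0 := by omega
    have hm : (((i₀:ℕ):ℤ) + 1 + (j:ℕ) - ((σ j : Fin (k - ↑i₀)):ℕ)) = 0 := by
      simp only [sN] at h0; omega
    rw [hm, hElem, dif_neg (by omega), if_pos rfl, fvec, dif_neg h]
    simp

lemma prod_hElem (i₀ : Fin k) (σ : Perm (Fin (k - ↑i₀))) :
    ∏ j : Fin (k - ↑i₀), hElem k (((i₀:ℕ):ℤ) + 1 + (j:ℕ) - ((σ j : Fin (k - ↑i₀)):ℕ))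
      = if Vd i₀ σ then monomial (vec i₀ σ) 1 else 0 := by
  by_cases hv : Vd i₀ σ
  · rw [if_pos hv, Finset.prod_congr rfl (fun j _ => hElem_term i₀ σ hv j),
      monomial_prod, vec]
  · rw [if_neg hv]
    rw [Vd] at hv; push_neg at hv
    obtain ⟨j, hj⟩ := hv
    exact Finset.prod_eq_zero (Finset.mem_univ j) (hElem_neg (by omega))

lemma rectSchur_eq (i₀ : Fin k) :
    rectSchur k (↑i₀ + 1)
      = ∑ σ : Perm (Fin (k - ↑i₀)), cc i₀ σ • monomial (vec i₀ σ) 1 := by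
  have hdim : k + 1 - (↑i₀ + 1) = k - ↑i₀ := by omega
  have hdet : rectSchur k (↑i₀ + 1)
      = (Matrix.of fun i j : Fin (k - ↑i₀) =>
          hElem k (((↑i₀ + 1 : ℕ) : ℤ) - (((i : ℕ) : ℤ) + 1) + (((j : ℕ) : ℤ) + 1))).det := by
    rw [rectSchur]
    rw [← Matrix.det_reindex_self (finCongr hdim)]
    congr 1
  rw [hdet, Matrix.det_apply']
  refine Finset.sum_congr rfl fun σ _ => ?_
  have hprod : ∏ j : Fin (k - ↑i₀),
      (Matrix.of fun i j : Fin (k - ↑i₀) =>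
        hElem k (((↑i₀ + 1 : ℕ) : ℤ) - (((i : ℕ) : ℤ) + 1) + (((j : ℕ) : ℤ) + 1))) (σ j) j
      = if Vd i₀ σ then monomial (vec i₀ σ) 1 else 0 := by
    rw [← prod_hElem i₀ σ]
    refine Finset.prod_congr rfl fun j _ => ?_
    simp only [Matrix.of_apply]
    congr 1
    push_cast
    ring
  rw [hprod, cc]
  by_cases hv : Vd i₀ σ
  · rw [if_pos hv, if_pos hv]
    rcases Int.units_eq_one_or (Equiv.Perm.sign σ) with h | h <;> simp [h]
  · simp [hv]

lemma mul_JT (i₀ : Fin k) (δ : Fin k →₀ ℕ) :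
    monomial δ (1:ℚ) * rectSchur k (↑i₀ + 1)
      = ∑ σ : Perm (Fin (k - ↑i₀)), cc i₀ σ • monomial (δ + vec i₀ σ) 1 := by
  rw [rectSchur_eq, Finset.mul_sum]
  refine Finset.sum_congr rfl fun σ _ => ?_
  rw [mul_smul_comm, monomial_mul, one_mul]


lemma rectSchur_mem (i₀ : Fin k) : rectSchur k (↑i₀ + 1) ∈ rectIdeal k := by
  apply Ideal.subset_span
  refine Set.mem_image_of_mem _ ?_
  simp only [Set.mem_Icc]
  have := i₀.isLt
  omega

lemma sub_piMon_mem : ∀ (N : ℕ) (ε : Fin k →₀ ℕ), mea k ε ≤ N →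
    monomial ε (1:ℚ) - piMon ε ∈ rectIdeal k := by
  intro N
  induction N using Nat.strong_induction_on with
  | _ N ih =>
    intro ε hε
    by_cases h : Red k ε
    · rw [piMon_red h, sub_self]
      exact zero_mem _
    · rw [piMon_unred h, sub_neg_eq_add]
      set i₀ := badIdx ε h with hi₀
      set δ := ε - rect k i₀ with hδ
      have hdecomp : δ + rect k i₀ = ε := sub_rect_add (badIdx_le ε h)
      have hsplit : (∑ σ : Perm (Fin (k - ↑i₀)), cc i₀ σ • monomial (δ + vec i₀ σ) (1:ℚ))
          = monomial ε 1
            + ∑ σ ∈ Finset.univ.erase 1, cc i₀ σ • monomial (δ + vec i₀ σ) 1 := by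
        rw [← Finset.add_sum_erase _ _ (Finset.mem_univ 1), cc_one, vec_one, one_smul, hdecomp]
      have key : monomial ε (1:ℚ)
            + ∑ σ ∈ Finset.univ.erase 1, cc i₀ σ • piMon (δ + vec i₀ σ)
          = monomial δ 1 * rectSchur k (↑i₀+1)
            - ∑ σ ∈ Finset.univ.erase 1,
                cc i₀ σ • (monomial (δ + vec i₀ σ) 1 - piMon (δ + vec i₀ σ)) := by
        rw [mul_JT i₀ δ, hsplit]
        simp only [smul_sub]
        rw [Finset.sum_sub_distrib]
        ring
      rw [key]
      apply Ideal.sub_mem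
      · exact Ideal.mul_mem_left _ _ (rectSchur_mem i₀)
      · apply Submodule.sum_mem
        intro σ hσ
        have hσ1 : σ ≠ 1 := (Finset.mem_erase.mp hσ).1
        by_cases hv : Vd i₀ σ
        · rw [smul_eq_C_mul]
          exact Ideal.mul_mem_left _ _
            (ih _ (lt_of_lt_of_le (mea_step_lt h hv hσ1) hε) _ le_rfl)
        · simp only [cc, if_neg hv, zero_smul]
          exact zero_mem _

lemma diamond : ∀ (N : ℕ) (i₀ : Fin k) (δ : Fin k →₀ ℕ), mea k (δ + rect k i₀) ≤ N →
    ∑ σ : Perm (Fin (k - ↑i₀)), cc i₀ σ • piMon (δ + vec i₀ σ) = 0 := by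
  intro N
  induction N using Nat.strong_induction_on with
  | _ N ih =>
    intro i₀ δ hN
    have hik := i₀.isLt
    have hnr : ¬ Red k (δ + rect k i₀) := by
      intro hr
      have h1 := hr i₀
      have h2 : (δ + rect k i₀) i₀ = δ i₀ + (k - ↑i₀) := by
        simp [rect, Finsupp.add_apply, Finsupp.single_apply]
      omega
    rw [← Finset.add_sum_erase _ _ (Finset.mem_univ 1), cc_one, vec_one, one_smul]
    obtain ⟨i₁, hi₁⟩ : ∃ i, badIdx (δ + rect k i₀) hnr = i := ⟨_, rfl⟩
    by_cases hcase : i₁ = i₀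
    · rw [piMon_unred hnr, hi₁, hcase, add_tsub_cancel_right, neg_add_cancel]
    · have hδi₁ : k - ↑i₁ ≤ δ i₁ := by
        have hb := badIdx_le (δ + rect k i₀) hnr
        rw [hi₁] at hb
        have heq : (δ + rect k i₀) i₁ = δ i₁ := by
          have hne : ¬ (i₀ = i₁) := fun hcon => hcase hcon.symm
          simp [rect, Finsupp.add_apply, Finsupp.single_apply, hne]
        omega
      obtain ⟨δ', hδ'⟩ : ∃ d, δ - rect k i₁ = d := ⟨_, rfl⟩
      have hδdecomp : δ' + rect k i₁ = δ := by rw [← hδ']; exact sub_rect_add hδi₁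
      have hηdecomp : δ + rect k i₀ = (δ' + rect k i₀) + rect k i₁ := by
        rw [← hδdecomp]; exact add_right_comm _ _ _
      have hmea : mea k (δ + rect k i₀)
          = mea k δ' + mea k (rect k i₀) + mea k (rect k i₁) := by
        rw [hηdecomp, mea_add, mea_add]
      have hexp : piMon (δ + rect k i₀)
          = - ∑ τ ∈ Finset.univ.erase (1 : Perm (Fin (k - ↑i₁))),
              cc i₁ τ • piMon ((δ' + vec i₁ τ) + rect k i₀) := by
        rw [piMon_unred hnr, hi₁]
        congr 1
        refine Finset.sum_congr rfl fun τ _ => ?_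
        have hsub2 : (δ + rect k i₀) - rect k i₁ = δ' + rect k i₀ := by
          rw [hηdecomp]; exact add_tsub_cancel_right _ _
        rw [hsub2, add_right_comm]
      have hterm : ∀ σ ∈ Finset.univ.erase (1 : Perm (Fin (k - ↑i₀))),
          cc i₀ σ • piMon (δ + vec i₀ σ)
            = cc i₀ σ • (- ∑ τ ∈ Finset.univ.erase (1 : Perm (Fin (k - ↑i₁))),
                cc i₁ τ • piMon ((δ' + vec i₁ τ) + vec i₀ σ)) := by
        intro σ hσ
        have hσ1 : σ ≠ 1 := (Finset.mem_erase.mp hσ).1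
        by_cases hv : Vd i₀ σ
        · congr 1
          have harg : δ + vec i₀ σ = (δ' + vec i₀ σ) + rect k i₁ := by
            rw [← hδdecomp]; exact add_right_comm _ _ _
          have hlt : mea k ((δ' + vec i₀ σ) + rect k i₁) < N := by
            have h1 : mea k (vec i₀ σ) < mea k (rect k i₀) := mea_vec_lt i₀ σ hv hσ1
            rw [mea_add, mea_add]
            omega
          have hIH := ih _ hlt i₁ (δ' + vec i₀ σ) le_rfl
          rw [← Finset.add_sum_erase _ _ (Finset.mem_univ 1), cc_one, vec_one,
            one_smul] at hIH
          rw [harg, eq_neg_of_add_eq_zero_left hIH, neg_inj]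
          refine Finset.sum_congr rfl fun τ _ => ?_
          rw [add_right_comm]
        · simp only [cc, if_neg hv, zero_smul]
      rw [hexp, Finset.sum_congr rfl hterm]
      have step2 : (∑ σ ∈ Finset.univ.erase (1 : Perm (Fin (k - ↑i₀))),
            cc i₀ σ • (- ∑ τ ∈ Finset.univ.erase (1 : Perm (Fin (k - ↑i₁))),
              cc i₁ τ • piMon ((δ' + vec i₁ τ) + vec i₀ σ)))
          = - ∑ τ ∈ Finset.univ.erase (1 : Perm (Fin (k - ↑i₁))),
              cc i₁ τ • (∑ σ ∈ Finset.univ.erase (1 : Perm (Fin (k - ↑i₀))),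
                cc i₀ σ • piMon ((δ' + vec i₁ τ) + vec i₀ σ)) := by
        simp only [smul_neg, Finset.smul_sum, ← Finset.sum_neg_distrib, smul_smul]
        rw [Finset.sum_comm]
        exact Finset.sum_congr rfl fun τ _ => Finset.sum_congr rfl fun σ _ => by
          rw [mul_comm]
      rw [step2, ← neg_add, neg_eq_zero, ← Finset.sum_add_distrib]
      apply Finset.sum_eq_zero
      intro τ hτ
      rw [← smul_add]
      by_cases hvτ : Vd i₁ τ
      · have hτ1 : τ ≠ 1 := (Finset.mem_erase.mp hτ).1
        have hlt : mea k ((δ' + vec i₁ τ) + rect k i₀) < N := by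
          have h1 : mea k (vec i₁ τ) < mea k (rect k i₁) := mea_vec_lt i₁ τ hvτ hτ1
          rw [mea_add, mea_add]
          omega
        have hIH := ih _ hlt i₀ (δ' + vec i₁ τ) le_rfl
        rw [← Finset.add_sum_erase _ _ (Finset.mem_univ 1), cc_one, vec_one,
          one_smul] at hIH
        rw [hIH, smul_zero]
      · simp only [cc, if_neg hvτ, zero_smul]


def NF (k : ℕ) : MvPolynomial (Fin k) ℚ →ₗ[ℚ] MvPolynomial (Fin k) ℚ :=
  (basisMonomials (Fin k) ℚ).constr ℚ piMon

lemma NF_monomial (ε : Fin k →₀ ℕ) : NF k (monomial ε 1) = piMon ε := by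
  have h : (monomial ε (1:ℚ)) = basisMonomials (Fin k) ℚ ε := by
    rw [coe_basisMonomials]
  rw [h, NF]
  exact Module.Basis.constr_basis _ _ _ _

lemma NF_JT (μ : Fin k →₀ ℕ) (ℓ : ℕ) (h1 : 1 ≤ ℓ) (h2 : ℓ ≤ k) :
    NF k (monomial μ 1 * rectSchur k ℓ) = 0 := by
  have hℓ : ((⟨ℓ - 1, by omega⟩ : Fin k) : ℕ) + 1 = ℓ := by simp; omega
  rw [← hℓ, mul_JT ⟨ℓ - 1, by omega⟩ μ, map_sum]
  rw [Finset.sum_congr rfl (fun σ _ => by rw [map_smul, NF_monomial])]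
  exact diamond _ ⟨ℓ - 1, by omega⟩ μ le_rfl

def Jspan (k : ℕ) : Submodule ℚ (MvPolynomial (Fin k) ℚ) :=
  Submodule.span ℚ {p | ∃ μ : Fin k →₀ ℕ, ∃ ℓ : ℕ,
    1 ≤ ℓ ∧ ℓ ≤ k ∧ p = monomial μ 1 * rectSchur k ℓ}

lemma Jspan_mul (r x : MvPolynomial (Fin k) ℚ) (hx : x ∈ Jspan k) : r * x ∈ Jspan k := by
  induction r using MvPolynomial.induction_on' with
  | monomial u a =>
    have : monomial u a * x = a • (monomial u 1 * x) := by
      rw [← smul_mul_assoc, smul_monomial, smul_eq_mul, mul_one]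
    rw [this]
    apply Submodule.smul_mem
    refine Submodule.span_induction ?_ ?_ ?_ ?_ hx
    · rintro p ⟨μ, ℓ, hl1, hl2, rfl⟩
      apply Submodule.subset_span
      exact ⟨u + μ, ℓ, hl1, hl2, by rw [← mul_assoc, monomial_mul, one_mul]⟩
    · rw [mul_zero]; exact zero_mem _
    · intro p q _ _ hp hq; rw [mul_add]; exact add_mem hp hq
    · intro c p _ hp; rw [mul_smul_comm]; exact Submodule.smul_mem _ _ hp
  | add p q hp hq =>
    rw [add_mul]; exact add_mem hp hq

lemma rectIdeal_le_Jspan {x : MvPolynomial (Fin k) ℚ} (hx : x ∈ rectIdeal k) :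
    x ∈ Jspan k := by
  refine Submodule.span_induction ?_ ?_ ?_ ?_ hx
  · rintro p ⟨ℓ, ⟨hl1, hl2⟩, rfl⟩
    apply Submodule.subset_span
    exact ⟨0, ℓ, hl1, hl2, by rw [monomial_zero', C_1, one_mul]⟩
  · exact zero_mem _
  · intro p q _ _ hp hq; exact add_mem hp hq
  · intro r p _ hp
    rw [smul_eq_mul]
    exact Jspan_mul r p hp

lemma NF_ideal {x : MvPolynomial (Fin k) ℚ} (hx : x ∈ rectIdeal k) : NF k x = 0 := by
  have hx' : x ∈ Jspan k := rectIdeal_le_Jspan hx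
  refine Submodule.span_induction ?_ ?_ ?_ ?_ hx'
  · rintro p ⟨μ, ℓ, hl1, hl2, rfl⟩
    exact NF_JT μ ℓ hl1 hl2
  · exact map_zero _
  · intro p q _ _ hp hq; rw [map_add, hp, hq, add_zero]
  · intro c p _ hp; rw [map_smul, hp, smul_zero]

/-- reduced exponent functions -/
def TF (k : ℕ) := {ε : Fin k → ℕ // ∀ i, ε i + (i : ℕ) + 1 ≤ k}

def toF {k : ℕ} (t : TF k) : Fin k →₀ ℕ := Finsupp.equivFunOnFinite.symm t.1

lemma toF_red (t : TF k) : Red k (toF t) := by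
  intro i
  have : toF t i = t.1 i := rfl
  rw [this]
  exact t.2 i

lemma toF_inj : Function.Injective (toF (k := k)) := by
  intro a b h
  exact Subtype.ext (Finsupp.equivFunOnFinite.symm.injective h)

def wMon {k : ℕ} (t : TF k) : MvPolynomial (Fin k) ℚ := basisMonomials (Fin k) ℚ (toF t)

lemma wMon_eq (t : TF k) : wMon t = monomial (toF t) 1 := by rw [wMon, coe_basisMonomials]

lemma wMon_li : LinearIndependent ℚ (wMon (k := k)) :=
  (basisMonomials (Fin k) ℚ).linearIndependent.comp toF toF_inj

lemma NF_wMon (t : TF k) : NF k (wMon t) = wMon t := by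
  rw [wMon_eq, NF_monomial, piMon_red (toF_red t)]

lemma prod_X_pow (f : Fin k → ℕ) :
    ∏ i : Fin k, (X i : MvPolynomial (Fin k) ℚ) ^ f i
      = monomial (Finsupp.equivFunOnFinite.symm f) 1 := by
  rw [monomial_eq, C_1, one_mul, Finsupp.prod_fintype _ _ (fun i => pow_zero _)]
  rfl

lemma piMon_mem_span : ∀ (N : ℕ) (ε : Fin k →₀ ℕ), mea k ε ≤ N →
    piMon ε ∈ Submodule.span ℚ (Set.range (wMon (k := k))) := by
  intro N
  induction N using Nat.strong_induction_on with
  | _ N ih =>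
    intro ε hε
    by_cases h : Red k ε
    · rw [piMon_red h]
      apply Submodule.subset_span
      refine ⟨⟨fun i => ε i, h⟩, ?_⟩
      refine (wMon_eq _).trans ?_
      congr 1
      exact congrArg monomial (Finsupp.equivFunOnFinite.symm_apply_apply ε)
    · rw [piMon_unred h]
      apply Submodule.neg_mem
      apply Submodule.sum_mem
      intro σ hσ
      have hσ1 : σ ≠ 1 := (Finset.mem_erase.mp hσ).1
      by_cases hv : Vd (badIdx ε h) σ
      · exact Submodule.smul_mem _ _
          (ih _ (lt_of_lt_of_le (mea_step_lt h hv hσ1) hε) _ le_rfl)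
      · simp only [cc, if_neg hv, zero_smul]
        exact zero_mem _


end RectAux

open RectAux in
/-- The images in `R/I_k` of the monomials
`h_1^{ε_1} h_2^{ε_2} ⋯ h_k^{ε_k}` with `0 ≤ ε_i ≤ k - i` for each `i` (here the
variable `X i` is `h_{i+1}`, so the condition reads `ε i + i + 1 ≤ k`; in
particular the exponent of `h_k` is `0`) form a basis of `R/I_k` as a
`ℚ`-vector space. -/
theorem monomial_basis_quotient (k : ℕ) (hk : 0 < k) :
    ∃ b : Module.Basis {ε : Fin k → ℕ // ∀ i, ε i + (i : ℕ) + 1 ≤ k} ℚ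
        (MvPolynomial (Fin k) ℚ ⧸ rectIdeal k),
      ∀ ε, b ε = Ideal.Quotient.mk (rectIdeal k)
        (∏ i : Fin k, MvPolynomial.X i ^ ε.1 i) := by
  classical
  let mkL : MvPolynomial (Fin k) ℚ →ₗ[ℚ] (MvPolynomial (Fin k) ℚ ⧸ rectIdeal k) :=
    (Ideal.Quotient.mkₐ ℚ (rectIdeal k)).toLinearMap
  have mkL_apply : ∀ p, mkL p = Ideal.Quotient.mk (rectIdeal k) p := fun p => rfl
  let v : TF k → (MvPolynomial (Fin k) ℚ ⧸ rectIdeal k) := fun t => mkL (wMon t)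
  have hli : LinearIndependent ℚ v := by
    rw [linearIndependent_iff]
    intro l hl
    have h1 : mkL (Finsupp.linearCombination ℚ (wMon (k := k)) l) = 0 := by
      rw [Finsupp.apply_linearCombination]
      exact hl
    have h2 : Finsupp.linearCombination ℚ (wMon (k := k)) l ∈ rectIdeal k := by
      rw [← Ideal.Quotient.eq_zero_iff_mem, ← mkL_apply]
      exact h1
    have h3 : NF k (Finsupp.linearCombination ℚ (wMon (k := k)) l) = 0 := NF_ideal h2
    rw [Finsupp.apply_linearCombination] at h3
    have h4 : (⇑(NF k) ∘ wMon (k := k)) = wMon (k := k) := funext fun t => NF_wMon t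
    rw [h4] at h3
    exact linearIndependent_iff.mp wMon_li l h3
  have hsp : ⊤ ≤ Submodule.span ℚ (Set.range v) := by
    rintro x -
    obtain ⟨p, rfl⟩ := Ideal.Quotient.mk_surjective x
    induction p using MvPolynomial.induction_on' with
    | monomial u a =>
      have e1 : (Ideal.Quotient.mk (rectIdeal k)) (monomial u a)
          = a • mkL (piMon u) := by
        have : (monomial u a : MvPolynomial (Fin k) ℚ) = a • monomial u 1 := by
          rw [smul_monomial, smul_eq_mul, mul_one]
        rw [this, ← mkL_apply, map_smul]
        congr 1
        have hmem : monomial u (1:ℚ) - piMon u ∈ rectIdeal k :=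
          sub_piMon_mem (mea k u) u le_rfl
        rw [mkL_apply, mkL_apply, Ideal.Quotient.mk_eq_mk_iff_sub_mem]
        exact hmem
      rw [e1]
      apply Submodule.smul_mem
      have hmem2 : piMon u ∈ Submodule.span ℚ (Set.range (wMon (k := k))) :=
        piMon_mem_span (mea k u) u le_rfl
      have : mkL (piMon u) ∈ Submodule.map mkL (Submodule.span ℚ (Set.range (wMon (k := k)))) :=
        Submodule.mem_map_of_mem hmem2
      rw [Submodule.map_span] at this
      have hrange : ⇑mkL '' Set.range (wMon (k := k)) = Set.range v := by
        rw [← Set.range_comp]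
        rfl
      rwa [hrange] at this
    | add p q hp hq =>
      rw [map_add]
      exact add_mem hp hq
  refine ⟨Module.Basis.mk hli hsp, ?_⟩
  intro ε
  refine (Module.Basis.mk_apply hli hsp ε).trans ?_
  show mkL (wMon ε) = _
  refine (congrArg mkL (wMon_eq ε)).trans ?_
  rw [mkL_apply]
  congr 1
  rw [prod_X_pow]
  rfl
end
end
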